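/- arXiv:1203.6396 — 2 statements merged into one kernel-verified Lean document; each statement's English description precedes it below -/
import Mathlib

section
/- Let p_1, p_2, p_3, p_4 ≥ 0 with p_1 + p_2 + p_3 + p_4 = 1 and let W be the binary input symmetric quaternary output kernel. Let Y be a random variable taking finitely many values in lists over {0,1}, and let Y^(4) be a random variable taking values in lists over {0⁻,0⁺,1⁻,1⁺} with |Y^(4)| = |Y| pointwise, such that for every y with P(Y=y) > 0 and every y′ with |y′| = |y|, P(Y^(4)=y′ | Y=y) = ∏_{i=1}^{|y|} W(y_i, y′_i). Then H(Y^(4)) ≥ H(Y) − E[|Y|] · log₂((p_1+p_3)² + (p_2+p_4)²). -/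
open scoped BigOperators
open Classical

noncomputable section

/-- A finite probability space: a probability mass function on a finite type. -/
structure FinProb (Ω : Type*) [Fintype Ω] where
  p : Ω → ℝ
  nonneg : ∀ ω, 0 ≤ p ω
  sum_one : ∑ ω, p ω = 1

variable {Ω : Type*} [Fintype Ω]

/-- Probability of an event. -/
def pr (μ : FinProb Ω) (E : Ω → Prop) : ℝ :=
  ∑ ω, if E ω then μ.p ω else 0

/-- Shannon entropy (base 2) of a random variable with finitely many values. -/
def entropy {S : Type*} (μ : FinProb Ω) (U : Ω → S) : ℝ :=
  -∑ u ∈ Finset.univ.image U,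
    pr μ (fun ω => U ω = u) * Real.logb 2 (pr μ (fun ω => U ω = u))

/-- Conditional Shannon entropy `H(U | V)`. -/
def condEntropy {S T : Type*} (μ : FinProb Ω) (U : Ω → S) (V : Ω → T) : ℝ :=
  ∑ v ∈ (Finset.univ.image V).filter (fun v => 0 < pr μ (fun ω => V ω = v)),
    pr μ (fun ω => V ω = v) *
      (-∑ u ∈ Finset.univ.image U,
        (pr μ (fun ω => U ω = u ∧ V ω = v) / pr μ (fun ω => V ω = v)) *
          Real.logb 2 (pr μ (fun ω => U ω = u ∧ V ω = v) / pr μ (fun ω => V ω = v)))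

/-- Mutual information `I(U;V) = H(U) - H(U|V)`. -/
def mutualInfo {S T : Type*} (μ : FinProb Ω) (U : Ω → S) (V : Ω → T) : ℝ :=
  entropy μ U - condEntropy μ U V

/-- Expected length of a list-valued random variable. -/
def expLen {A : Type*} (μ : FinProb Ω) (Y : Ω → List A) : ℝ :=
  ∑ ω, μ.p ω * (Y ω).length

/-- The binary input symmetric quaternary output kernel. Input alphabet `{0,1}` is `Bool`;
the output alphabet `{0⁻,0⁺,1⁻,1⁺}` is modeled as `Bool × Bool`, where `(c, s)` denotes
`c⁻` when `s = false` and `c⁺` when `s = true`: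
`W b b⁻ = p1`, `W b b⁺ = p2`, `W b (1-b)⁻ = p3`, `W b (1-b)⁺ = p4`. -/
def quatKernel (p1 p2 p3 p4 : ℝ) : Bool → Bool × Bool → ℝ :=
  fun b k => if k.1 = b then (if k.2 then p2 else p1) else (if k.2 then p4 else p3)


section AuxProb

lemma pr_nonneg (μ : FinProb Ω) (E : Ω → Prop) : 0 ≤ pr μ E := by
  unfold pr
  refine Finset.sum_nonneg fun ω _ => ?_
  split
  · exact μ.nonneg ω
  · exact le_refl 0

lemma pr_mono (μ : FinProb Ω) {E F : Ω → Prop} (h : ∀ ω, E ω → F ω) : pr μ E ≤ pr μ F := by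
  unfold pr
  refine Finset.sum_le_sum fun ω _ => ?_
  by_cases hE : E ω
  · rw [if_pos hE, if_pos (h ω hE)]
  · rw [if_neg hE]
    split
    · exact μ.nonneg ω
    · exact le_refl 0

lemma pr_congr (μ : FinProb Ω) {E F : Ω → Prop} (h : ∀ ω, E ω ↔ F ω) : pr μ E = pr μ F := by
  unfold pr
  exact Finset.sum_congr rfl fun ω _ => if_congr (h ω) rfl rfl

lemma pr_false (μ : FinProb Ω) : pr μ (fun _ => False) = 0 := by
  simp [pr]

lemma pr_pos_exists {μ : FinProb Ω} {E : Ω → Prop} (h : 0 < pr μ E) : ∃ ω, E ω := by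
  by_contra hc
  push_neg at hc
  rw [pr_congr μ (fun ω => iff_of_false (hc ω) not_false), pr_false] at h
  exact lt_irrefl 0 h

lemma pr_eq_zero_of_not {μ : FinProb Ω} {E : Ω → Prop} (h : ∀ ω, ¬ E ω) : pr μ E = 0 := by
  rw [pr_congr μ (fun ω => iff_of_false (h ω) not_false), pr_false]

lemma sum_image_fiber {S : Type*} (V : Ω → S) (f : S → ℝ) (g : Ω → ℝ) :
    ∑ v ∈ Finset.univ.image V, f v * (∑ ω, if V ω = v then g ω else 0)
      = ∑ ω, f (V ω) * g ω := by
  simp_rw [Finset.mul_sum]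
  rw [Finset.sum_comm]
  refine Finset.sum_congr rfl fun ω _ => ?_
  rw [Finset.sum_eq_single (V ω)]
  · simp
  · intro v _ hv
    rw [if_neg (fun h => hv h.symm), mul_zero]
  · intro h
    exact absurd (Finset.mem_image_of_mem V (Finset.mem_univ ω)) h

lemma sum_pr_fiber {S : Type*} (μ : FinProb Ω) (V : Ω → S) (f : S → ℝ) :
    ∑ v ∈ Finset.univ.image V, f v * pr μ (fun ω => V ω = v) = ∑ ω, f (V ω) * μ.p ω :=
  sum_image_fiber V f μ.p

lemma sum_pr_and {S : Type*} (μ : FinProb Ω) (V : Ω → S) (E : Ω → Prop) :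
    ∑ v ∈ Finset.univ.image V, pr μ (fun ω => E ω ∧ V ω = v) = pr μ E := by
  have h1 : ∀ v, pr μ (fun ω => E ω ∧ V ω = v)
      = ∑ ω, if V ω = v then (if E ω then μ.p ω else 0) else 0 := by
    intro v
    unfold pr
    refine Finset.sum_congr rfl fun ω _ => ?_
    by_cases hE : E ω <;> by_cases hV : V ω = v <;> simp [hE, hV]
  calc ∑ v ∈ Finset.univ.image V, pr μ (fun ω => E ω ∧ V ω = v)
      = ∑ v ∈ Finset.univ.image V, (1:ℝ) * ∑ ω, if V ω = v then (if E ω then μ.p ω else 0) else 0 := by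
        simp_rw [one_mul]; exact Finset.sum_congr rfl fun v _ => h1 v
    _ = ∑ ω, (1:ℝ) * (if E ω then μ.p ω else 0) := sum_image_fiber V (fun _ => 1) _
    _ = pr μ E := by simp [pr]

end AuxProb

section AuxKernel
def qs (p1 p2 p3 p4 : ℝ) : Bool × Bool → ℝ := fun k => if k.2 then p2 + p4 else p1 + p3

variable (p1 p2 p3 p4 : ℝ)

def Kl (y : List Bool) (y' : List (Bool × Bool)) : ℝ :=
  ∏ i ∈ Finset.range y.length, quatKernel p1 p2 p3 p4 (y.getD i false) (y'.getD i (false, false))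

def Ml (y' : List (Bool × Bool)) : ℝ :=
  ∏ i ∈ Finset.range y'.length, qs p1 p2 p3 p4 (y'.getD i (false, false))

lemma quatKernel_nonneg (h1 : 0 ≤ p1) (h2 : 0 ≤ p2) (h3 : 0 ≤ p3) (h4 : 0 ≤ p4)
    (b : Bool) (k : Bool × Bool) : 0 ≤ quatKernel p1 p2 p3 p4 b k := by
  unfold quatKernel
  split <;> split <;> assumption

lemma Kl_nonneg (h1 : 0 ≤ p1) (h2 : 0 ≤ p2) (h3 : 0 ≤ p3) (h4 : 0 ≤ p4)
    (y : List Bool) (y' : List (Bool × Bool)) : 0 ≤ Kl p1 p2 p3 p4 y y' :=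
  Finset.prod_nonneg fun i _ => quatKernel_nonneg p1 p2 p3 p4 h1 h2 h3 h4 _ _

-- per symbol column sum
lemma col_sum (k : Bool × Bool) :
    quatKernel p1 p2 p3 p4 false k + quatKernel p1 p2 p3 p4 true k = qs p1 p2 p3 p4 k := by
  rcases k with ⟨c, s⟩
  cases c <;> cases s <;> simp [quatKernel, qs] <;> ring

-- per symbol: ∑_k W c k * qs k = q
lemma sym_sum (c : Bool) :
    ∑ k : Bool × Bool, quatKernel p1 p2 p3 p4 c k * qs p1 p2 p3 p4 k
      = (p1 + p3) ^ 2 + (p2 + p4) ^ 2 := by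
  rw [Fintype.sum_prod_type]
  cases c <;> simp [quatKernel, qs, Fintype.sum_bool] <;> ring

-- Kl with ofFn left arg, arbitrary y' with matching length
lemma Kl_ofFn_left {n : ℕ} (a : Fin n → Bool) (y' : List (Bool × Bool)) :
    Kl p1 p2 p3 p4 (List.ofFn a) y'
      = ∏ i : Fin n, quatKernel p1 p2 p3 p4 (a i) (y'.getD (i : ℕ) (false, false)) := by
  unfold Kl
  rw [List.length_ofFn, ← Fin.prod_univ_eq_prod_range
    (fun i => quatKernel p1 p2 p3 p4 ((List.ofFn a).getD i false) (y'.getD i (false, false))) n]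
  refine Finset.prod_congr rfl fun i _ => ?_
  congr 1
  rw [List.getD_eq_getElem _ _ (by simpa using i.isLt), List.getElem_ofFn]

lemma Kl_ofFn_ofFn {n : ℕ} (a : Fin n → Bool) (b : Fin n → Bool × Bool) :
    Kl p1 p2 p3 p4 (List.ofFn a) (List.ofFn b)
      = ∏ i : Fin n, quatKernel p1 p2 p3 p4 (a i) (b i) := by
  rw [Kl_ofFn_left]
  refine Finset.prod_congr rfl fun i _ => ?_
  congr 1
  rw [List.getD_eq_getElem _ _ (by simpa using i.isLt), List.getElem_ofFn]

lemma Ml_ofFn {n : ℕ} (b : Fin n → Bool × Bool) :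
    Ml p1 p2 p3 p4 (List.ofFn b) = ∏ i : Fin n, qs p1 p2 p3 p4 (b i) := by
  unfold Ml
  rw [List.length_ofFn, ← Fin.prod_univ_eq_prod_range
    (fun i => qs p1 p2 p3 p4 ((List.ofFn b).getD i (false, false))) n]
  refine Finset.prod_congr rfl fun i _ => ?_
  congr 1
  rw [List.getD_eq_getElem _ _ (by simpa using i.isLt), List.getElem_ofFn]

-- (L1) sum over all binary inputs of Kl equals Ml
lemma sum_Kl_eq_Ml (y' : List (Bool × Bool)) {n : ℕ} (hn : y'.length = n) :
    ∑ a : Fin n → Bool, Kl p1 p2 p3 p4 (List.ofFn a) y' = Ml p1 p2 p3 p4 y' := by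
  have : ∀ a : Fin n → Bool, Kl p1 p2 p3 p4 (List.ofFn a) y'
      = ∏ i : Fin n, quatKernel p1 p2 p3 p4 (a i) (y'.getD (i : ℕ) (false, false)) :=
    fun a => Kl_ofFn_left p1 p2 p3 p4 a y'
  simp_rw [this]
  rw [show (Finset.univ : Finset (Fin n → Bool)) = Fintype.piFinset (fun _ => Finset.univ) from
    (Fintype.piFinset_univ).symm]
  rw [← Finset.prod_univ_sum (fun _ : Fin n => (Finset.univ : Finset Bool))
    (fun (i : Fin n) (c : Bool) => quatKernel p1 p2 p3 p4 c (y'.getD (i : ℕ) (false, false)))]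
  unfold Ml
  subst hn
  rw [← Fin.prod_univ_eq_prod_range (fun i => qs p1 p2 p3 p4 (y'.getD i (false, false)))]
  refine Finset.prod_congr rfl fun i _ => ?_
  rw [Fintype.sum_bool]
  rw [add_comm]
  exact col_sum p1 p2 p3 p4 _

-- (L2) sum over all outputs of Kl * Ml equals q ^ n
lemma sum_Kl_Ml (y : List Bool) {n : ℕ} (hn : y.length = n) :
    ∑ b : Fin n → Bool × Bool,
      Kl p1 p2 p3 p4 y (List.ofFn b) * Ml p1 p2 p3 p4 (List.ofFn b)
      = ((p1 + p3) ^ 2 + (p2 + p4) ^ 2) ^ n := by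
  have hK : ∀ b : Fin n → Bool × Bool, Kl p1 p2 p3 p4 y (List.ofFn b)
      = ∏ i : Fin n, quatKernel p1 p2 p3 p4 (y.getD (i : ℕ) false) (b i) := by
    intro b
    unfold Kl
    rw [hn, ← Fin.prod_univ_eq_prod_range
      (fun i => quatKernel p1 p2 p3 p4 (y.getD i false) ((List.ofFn b).getD i (false, false))) n]
    refine Finset.prod_congr rfl fun i _ => ?_
    congr 1
    rw [List.getD_eq_getElem _ _ (by simpa using i.isLt), List.getElem_ofFn]
  simp_rw [hK, Ml_ofFn, ← Finset.prod_mul_distrib]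
  rw [show (Finset.univ : Finset (Fin n → Bool × Bool)) = Fintype.piFinset (fun _ => Finset.univ)
    from (Fintype.piFinset_univ).symm]
  rw [← Finset.prod_univ_sum (fun _ : Fin n => (Finset.univ : Finset (Bool × Bool)))
    (fun (i : Fin n) (k : Bool × Bool) => quatKernel p1 p2 p3 p4 (y.getD (i : ℕ) false) k * qs p1 p2 p3 p4 k)]
  rw [Finset.prod_congr rfl fun (i : Fin n) _ => sym_sum p1 p2 p3 p4 (y.getD (i : ℕ) false)]
  simp

end AuxKernel

section AuxBridge

lemma exists_ofFn {α : Type*} (l : List α) {n : ℕ} (h : l.length = n) :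
    ∃ f : Fin n → α, l = List.ofFn f := by
  subst h
  exact ⟨l.get, (List.ofFn_get l).symm⟩

lemma sum_filter_ofFn_le {α : Type*} [Fintype α] (T : Finset (List α)) (n : ℕ)
    (F : List α → ℝ) (hF : ∀ l, 0 ≤ F l) :
    ∑ l ∈ T.filter (fun l => l.length = n), F l ≤ ∑ f : Fin n → α, F (List.ofFn f) := by
  have hsub : T.filter (fun l => l.length = n) ⊆
      Finset.univ.image (List.ofFn : (Fin n → α) → List α) := by
    intro l hl
    rw [Finset.mem_filter] at hl
    obtain ⟨f, hf⟩ := exists_ofFn l hl.2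
    exact Finset.mem_image.mpr ⟨f, Finset.mem_univ f, hf.symm⟩
  calc ∑ l ∈ T.filter (fun l => l.length = n), F l
      ≤ ∑ l ∈ Finset.univ.image (List.ofFn : (Fin n → α) → List α), F l :=
        Finset.sum_le_sum_of_subset_of_nonneg hsub (fun l _ _ => hF l)
    _ = ∑ f : Fin n → α, F (List.ofFn f) :=
        Finset.sum_image (fun f _ g _ h => List.ofFn_injective h)

lemma Ml_nonneg (p1 p2 p3 p4 : ℝ) (h1 : 0 ≤ p1) (h2 : 0 ≤ p2) (h3 : 0 ≤ p3) (h4 : 0 ≤ p4)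
    (y' : List (Bool × Bool)) : 0 ≤ Ml p1 p2 p3 p4 y' := by
  refine Finset.prod_nonneg fun i _ => ?_
  unfold qs
  split <;> linarith


lemma main_ineq (p1 p2 p3 p4 : ℝ)
    (h1 : 0 ≤ p1) (h2 : 0 ≤ p2) (h3 : 0 ≤ p3) (h4 : 0 ≤ p4) (hsum : p1+p2+p3+p4 = 1)
    (T : Finset (List Bool)) (T' : Finset (List (Bool × Bool)))
    (P : List Bool → ℝ) (P' : List (Bool × Bool) → ℝ)
    (J : List (Bool × Bool) → List Bool → ℝ)
    (hPnn : ∀ y, 0 ≤ P y) (hP'nn : ∀ y', 0 ≤ P' y')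
    (hJnn : ∀ y' y, 0 ≤ J y' y)
    (hPsum : ∑ y ∈ T, P y = 1)
    (hJP : ∀ y ∈ T, ∑ y' ∈ T', J y' y = P y)
    (hJP' : ∀ y' ∈ T', ∑ y ∈ T, J y' y = P' y')
    (hJ0 : ∀ y' y, y'.length ≠ y.length → J y' y = 0)
    (hJle : ∀ y' y, J y' y ≤ P y)
    (hJleP' : ∀ y' y, J y' y ≤ P' y')
    (hJK : ∀ y y', 0 < P y → y'.length = y.length → J y' y = P y * Kl p1 p2 p3 p4 y y') :
    ∑ y' ∈ T', P' y' * Real.logb 2 (P' y')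
      ≤ ∑ y ∈ T, P y * (Real.logb 2 (P y)
          + (y.length : ℝ) * Real.logb 2 ((p1 + p3) ^ 2 + (p2 + p4) ^ 2)) := by
  set q : ℝ := (p1 + p3) ^ 2 + (p2 + p4) ^ 2 with hqdef
  have hq : 0 < q := by rw [hqdef]; nlinarith [sq_nonneg (p1 + p3 - (p2 + p4))]
  have hlog2 : 0 < Real.log 2 := Real.log_pos one_lt_two
  have hKlnn := Kl_nonneg p1 p2 p3 p4 h1 h2 h3 h4
  have hMlnn := Ml_nonneg p1 p2 p3 p4 h1 h2 h3 h4
  have hJKle : ∀ y y', J y' y ≤ P y * Kl p1 p2 p3 p4 y y' := by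
    intro y y'
    by_cases hl : y'.length = y.length
    · rcases eq_or_lt_of_le (hPnn y) with hP | hP
      · have h0 : J y' y ≤ 0 := by rw [hP]; exact hJle y' y
        calc J y' y ≤ 0 := h0
          _ = P y * Kl p1 p2 p3 p4 y y' := by rw [← hP, zero_mul]
      · exact le_of_eq (hJK y y' hP hl)
    · rw [hJ0 y' y hl]
      exact mul_nonneg (hPnn y) (hKlnn y y')
  -- termwise Jensen bound
  have hterm : ∀ y ∈ T, ∀ y' ∈ T',
      J y' y * Real.logb 2 (P' y')
          - J y' y * (Real.logb 2 (P y) + (y.length : ℝ) * Real.logb 2 q)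
        ≤ ((if y.length = y'.length then Kl p1 p2 p3 p4 y y' * P' y' / q ^ y.length else 0)
            - J y' y) / Real.log 2 := by
    intro y _ y' _
    rcases eq_or_lt_of_le (hJnn y' y) with hJ | hJ
    · rw [← hJ]
      simp only [zero_mul, sub_zero, sub_self]
      norm_num
      apply div_nonneg _ hlog2.le
      split
      · exact div_nonneg (mul_nonneg (hKlnn y y') (hP'nn y')) (pow_nonneg hq.le _)
      · exact le_refl 0
    · have hlen : y'.length = y.length := by
        by_contra hc
        rw [hJ0 y' y hc] at hJ
        exact lt_irrefl 0 hJ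
      have hPy : 0 < P y := lt_of_lt_of_le hJ (hJle y' y)
      have hP' : 0 < P' y' := lt_of_lt_of_le hJ (hJleP' y' y)
      have hqn : (0:ℝ) < q ^ y.length := pow_pos hq _
      have hJeq : J y' y = P y * Kl p1 p2 p3 p4 y y' := hJK y y' hPy hlen
      have hx : 0 < P' y' / (P y * q ^ y.length) := div_pos hP' (mul_pos hPy hqn)
      have hlogx := Real.log_le_sub_one_of_pos hx
      have hlogb : Real.logb 2 (P' y') - (Real.logb 2 (P y) + (y.length : ℝ) * Real.logb 2 q)
          = Real.log (P' y' / (P y * q ^ y.length)) / Real.log 2 := by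
        rw [Real.log_div hP'.ne' (mul_pos hPy hqn).ne', Real.log_mul hPy.ne' hqn.ne',
          Real.log_pow]
        simp only [Real.logb]
        ring
      rw [if_pos hlen.symm]
      calc J y' y * Real.logb 2 (P' y')
            - J y' y * (Real.logb 2 (P y) + (y.length : ℝ) * Real.logb 2 q)
          = J y' y * (Real.log (P' y' / (P y * q ^ y.length)) / Real.log 2) := by
            rw [← hlogb]; ring
        _ ≤ J y' y * ((P' y' / (P y * q ^ y.length) - 1) / Real.log 2) := by
            apply mul_le_mul_of_nonneg_left _ hJ.le
            exact (div_le_div_iff_of_pos_right hlog2).mpr hlogx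
        _ = (Kl p1 p2 p3 p4 y y' * P' y' / q ^ y.length - J y' y) / Real.log 2 := by
            rw [hJeq]
            field_simp
  have hJsum : ∑ y ∈ T, ∑ y' ∈ T', J y' y = 1 := by
    rw [Finset.sum_congr rfl (fun y hy => hJP y hy), hPsum]
  -- bounding the B-sum by 1
  have hBle : ∑ y ∈ T, ∑ y' ∈ T',
      (if y.length = y'.length then Kl p1 p2 p3 p4 y y' * P' y' / q ^ y.length else 0) ≤ 1 := by
    rw [Finset.sum_comm]
    have step2 : ∀ y' ∈ T',
        ∑ y ∈ T, (if y.length = y'.length then Kl p1 p2 p3 p4 y y' * P' y' / q ^ y.length else 0)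
          ≤ Ml p1 p2 p3 p4 y' * (P' y' / q ^ y'.length) := by
      intro y' _
      rw [← Finset.sum_filter]
      have hcg : ∀ y ∈ T.filter (fun y => y.length = y'.length),
          Kl p1 p2 p3 p4 y y' * P' y' / q ^ y.length
            = Kl p1 p2 p3 p4 y y' * (P' y' / q ^ y'.length) := by
        intro y hy
        rw [Finset.mem_filter] at hy
        rw [hy.2, mul_div_assoc]
      rw [Finset.sum_congr rfl hcg, ← Finset.sum_mul]
      apply mul_le_mul_of_nonneg_right _ (div_nonneg (hP'nn y') (pow_nonneg hq.le _))
      calc ∑ y ∈ T.filter (fun y => y.length = y'.length), Kl p1 p2 p3 p4 y y'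
          ≤ ∑ a : Fin y'.length → Bool, Kl p1 p2 p3 p4 (List.ofFn a) y' :=
            sum_filter_ofFn_le T y'.length (fun y => Kl p1 p2 p3 p4 y y')
              (fun l => hKlnn l y')
        _ = Ml p1 p2 p3 p4 y' := sum_Kl_eq_Ml p1 p2 p3 p4 y' rfl
    have step4 : ∀ z ∈ T,
        ∑ y' ∈ T', (if y'.length = z.length
            then P z / q ^ z.length * (Kl p1 p2 p3 p4 z y' * Ml p1 p2 p3 p4 y') else 0)
          ≤ P z := by
      intro z _
      rw [← Finset.sum_filter, ← Finset.mul_sum]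
      have hb : ∑ y' ∈ T'.filter (fun y' => y'.length = z.length),
          Kl p1 p2 p3 p4 z y' * Ml p1 p2 p3 p4 y' ≤ q ^ z.length := by
        calc ∑ y' ∈ T'.filter (fun y' => y'.length = z.length),
              Kl p1 p2 p3 p4 z y' * Ml p1 p2 p3 p4 y'
            ≤ ∑ b : Fin z.length → Bool × Bool,
                Kl p1 p2 p3 p4 z (List.ofFn b) * Ml p1 p2 p3 p4 (List.ofFn b) :=
              sum_filter_ofFn_le T' z.length
                (fun y' => Kl p1 p2 p3 p4 z y' * Ml p1 p2 p3 p4 y')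
                (fun l => mul_nonneg (hKlnn z l) (hMlnn l))
          _ = q ^ z.length := by rw [sum_Kl_Ml p1 p2 p3 p4 z rfl, hqdef]
      calc P z / q ^ z.length
            * ∑ y' ∈ T'.filter (fun y' => y'.length = z.length),
                Kl p1 p2 p3 p4 z y' * Ml p1 p2 p3 p4 y'
          ≤ P z / q ^ z.length * q ^ z.length :=
            mul_le_mul_of_nonneg_left hb (div_nonneg (hPnn z) (pow_nonneg hq.le _))
        _ = P z := div_mul_cancel₀ (P z) (pow_pos hq _).ne'
    calc ∑ y' ∈ T', ∑ y ∈ T,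
          (if y.length = y'.length then Kl p1 p2 p3 p4 y y' * P' y' / q ^ y.length else 0)
        ≤ ∑ y' ∈ T', Ml p1 p2 p3 p4 y' * (P' y' / q ^ y'.length) :=
          Finset.sum_le_sum step2
      _ = ∑ y' ∈ T', ∑ z ∈ T, J y' z * (Ml p1 p2 p3 p4 y' / q ^ y'.length) := by
          refine Finset.sum_congr rfl fun y' hy' => ?_
          rw [show Ml p1 p2 p3 p4 y' * (P' y' / q ^ y'.length)
            = P' y' * (Ml p1 p2 p3 p4 y' / q ^ y'.length) by ring, ← hJP' y' hy',
            Finset.sum_mul]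
      _ ≤ ∑ y' ∈ T', ∑ z ∈ T, (if y'.length = z.length
            then P z / q ^ z.length * (Kl p1 p2 p3 p4 z y' * Ml p1 p2 p3 p4 y') else 0) := by
          refine Finset.sum_le_sum fun y' _ => Finset.sum_le_sum fun z _ => ?_
          by_cases hl : y'.length = z.length
          · rw [if_pos hl, hl]
            calc J y' z * (Ml p1 p2 p3 p4 y' / q ^ z.length)
                ≤ P z * Kl p1 p2 p3 p4 z y' * (Ml p1 p2 p3 p4 y' / q ^ z.length) :=
                  mul_le_mul_of_nonneg_right (hJKle z y')
                    (div_nonneg (hMlnn y') (pow_nonneg hq.le _))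
              _ = P z / q ^ z.length * (Kl p1 p2 p3 p4 z y' * Ml p1 p2 p3 p4 y') := by ring
          · rw [if_neg hl, hJ0 y' z hl, zero_mul]
      _ = ∑ z ∈ T, ∑ y' ∈ T', (if y'.length = z.length
            then P z / q ^ z.length * (Kl p1 p2 p3 p4 z y' * Ml p1 p2 p3 p4 y') else 0) :=
          Finset.sum_comm
      _ ≤ ∑ z ∈ T, P z := Finset.sum_le_sum step4
      _ = 1 := hPsum
  -- key inequality
  have key : ∑ y ∈ T, ∑ y' ∈ T',
      (J y' y * Real.logb 2 (P' y')
        - J y' y * (Real.logb 2 (P y) + (y.length : ℝ) * Real.logb 2 q)) ≤ 0 := by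
    calc ∑ y ∈ T, ∑ y' ∈ T',
          (J y' y * Real.logb 2 (P' y')
            - J y' y * (Real.logb 2 (P y) + (y.length : ℝ) * Real.logb 2 q))
        ≤ ∑ y ∈ T, ∑ y' ∈ T',
            ((if y.length = y'.length then Kl p1 p2 p3 p4 y y' * P' y' / q ^ y.length else 0)
              - J y' y) / Real.log 2 :=
          Finset.sum_le_sum fun y hy => Finset.sum_le_sum fun y' hy' => hterm y hy y' hy'
      _ = ((∑ y ∈ T, ∑ y' ∈ T',
            (if y.length = y'.length then Kl p1 p2 p3 p4 y y' * P' y' / q ^ y.length else 0))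
            - ∑ y ∈ T, ∑ y' ∈ T', J y' y) / Real.log 2 := by
          simp only [sub_div, Finset.sum_sub_distrib, Finset.sum_div]
      _ ≤ 0 := by
          apply div_nonpos_of_nonpos_of_nonneg _ hlog2.le
          rw [hJsum]
          linarith [hBle]
  -- final assembly
  have e1 : ∑ y' ∈ T', P' y' * Real.logb 2 (P' y')
      = ∑ y ∈ T, ∑ y' ∈ T', J y' y * Real.logb 2 (P' y') := by
    rw [← Finset.sum_comm]
    refine Finset.sum_congr rfl fun y' hy' => ?_
    rw [← hJP' y' hy', Finset.sum_mul]
  have e2 : ∑ y ∈ T, P y * (Real.logb 2 (P y) + (y.length : ℝ) * Real.logb 2 q)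
      = ∑ y ∈ T, ∑ y' ∈ T',
          J y' y * (Real.logb 2 (P y) + (y.length : ℝ) * Real.logb 2 q) := by
    refine Finset.sum_congr rfl fun y hy => ?_
    rw [← hJP y hy, Finset.sum_mul]
  rw [e1, e2]
  have key' := key
  simp only [Finset.sum_sub_distrib] at key'
  linarith [key']

end AuxBridge

/-- for the binary input symmetric quaternary output kernel,
`H(Y⁽⁴⁾) ≥ H(Y) − E[|Y|]·log₂((p1+p3)² + (p2+p4)²)`. -/
theorem stmt13 {Ω : Type*} [Fintype Ω] (μ : FinProb Ω)
    (p1 p2 p3 p4 : ℝ)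
    (h1 : 0 ≤ p1) (h2 : 0 ≤ p2) (h3 : 0 ≤ p3) (h4 : 0 ≤ p4)
    (hsum : p1 + p2 + p3 + p4 = 1)
    (Y : Ω → List Bool) (Y4 : Ω → List (Bool × Bool))
    (hlen : ∀ ω, (Y4 ω).length = (Y ω).length)
    (hcond : ∀ (n : ℕ) (y : Fin n → Bool) (y' : Fin n → Bool × Bool),
      0 < pr μ (fun ω => Y ω = List.ofFn y) →
      pr μ (fun ω => Y4 ω = List.ofFn y' ∧ Y ω = List.ofFn y) /
        pr μ (fun ω => Y ω = List.ofFn y) = ∏ i, quatKernel p1 p2 p3 p4 (y i) (y' i)) :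
    entropy μ Y4 ≥ entropy μ Y -
      expLen μ Y * Real.logb 2 ((p1 + p3) ^ 2 + (p2 + p4) ^ 2) := by
  have hPsum : ∑ y ∈ (@Finset.image Ω (List Bool) (fun a b => Classical.propDecidable (a = b)) Y Finset.univ), pr μ (fun ω => Y ω = y) = 1 := by
    have h := sum_pr_fiber μ Y (fun _ => (1 : ℝ))
    simp only [one_mul] at h
    exact h.trans μ.sum_one
  have hJP : ∀ y ∈ (@Finset.image Ω (List Bool) (fun a b => Classical.propDecidable (a = b)) Y Finset.univ),
      ∑ y' ∈ (@Finset.image Ω (List (Bool × Bool)) (fun a b => Classical.propDecidable (a = b)) Y4 Finset.univ), pr μ (fun ω => Y4 ω = y' ∧ Y ω = y)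
        = pr μ (fun ω => Y ω = y) := by
    intro y _
    have h := sum_pr_and μ Y4 (fun ω => Y ω = y)
    rw [← h]
    exact Finset.sum_congr rfl fun y' _ => pr_congr μ fun ω => and_comm
  have hJP' : ∀ y' ∈ (@Finset.image Ω (List (Bool × Bool)) (fun a b => Classical.propDecidable (a = b)) Y4 Finset.univ),
      ∑ y ∈ (@Finset.image Ω (List Bool) (fun a b => Classical.propDecidable (a = b)) Y Finset.univ), pr μ (fun ω => Y4 ω = y' ∧ Y ω = y)
        = pr μ (fun ω => Y4 ω = y') := by
    intro y' _
    exact sum_pr_and μ Y (fun ω => Y4 ω = y')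
  have hJ0 : ∀ (y' : List (Bool × Bool)) (y : List Bool), y'.length ≠ y.length →
      pr μ (fun ω => Y4 ω = y' ∧ Y ω = y) = 0 := by
    intro y' y h
    apply pr_eq_zero_of_not
    rintro ω ⟨hA, hB⟩
    exact h (by rw [← hA, ← hB, hlen ω])
  have hJK : ∀ (y : List Bool) (y' : List (Bool × Bool)),
      0 < pr μ (fun ω => Y ω = y) → y'.length = y.length →
      pr μ (fun ω => Y4 ω = y' ∧ Y ω = y)
        = pr μ (fun ω => Y ω = y) * Kl p1 p2 p3 p4 y y' := by
    intro y y' hPy hl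
    obtain ⟨a, ha⟩ := exists_ofFn y (rfl : y.length = y.length)
    obtain ⟨b, hb⟩ := exists_ofFn y' hl
    rw [ha] at hPy
    rw [ha, hb, Kl_ofFn_ofFn]
    have h := hcond y.length a b hPy
    rw [div_eq_iff hPy.ne'] at h
    rw [h]
    ring
  have hS := main_ineq p1 p2 p3 p4 h1 h2 h3 h4 hsum
    ((@Finset.image Ω (List Bool) (fun a b => Classical.propDecidable (a = b)) Y Finset.univ)) ((@Finset.image Ω (List (Bool × Bool)) (fun a b => Classical.propDecidable (a = b)) Y4 Finset.univ))
    (fun y => pr μ (fun ω => Y ω = y)) (fun y' => pr μ (fun ω => Y4 ω = y'))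
    (fun y' y => pr μ (fun ω => Y4 ω = y' ∧ Y ω = y))
    (fun y => pr_nonneg μ _) (fun y' => pr_nonneg μ _) (fun y' y => pr_nonneg μ _)
    hPsum hJP hJP' hJ0
    (fun y' y => pr_mono μ (fun ω h => h.2))
    (fun y' y => pr_mono μ (fun ω h => h.1))
    hJK
  beta_reduce at hS
  have hexp : expLen μ Y
      = ∑ y ∈ (@Finset.image Ω (List Bool) (fun a b => Classical.propDecidable (a = b)) Y Finset.univ), pr μ (fun ω => Y ω = y) * ((y.length : ℕ) : ℝ) := by
    have h := sum_pr_fiber μ Y (fun y => ((y.length : ℕ) : ℝ))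
    unfold expLen
    rw [show (∑ ω, μ.p ω * ((Y ω).length : ℝ))
        = ∑ ω, (((Y ω).length : ℕ) : ℝ) * μ.p ω from
      Finset.sum_congr rfl fun ω _ => mul_comm _ _, ← h]
    exact Finset.sum_congr rfl fun y _ => mul_comm _ _
  have expand : ∑ y ∈ (@Finset.image Ω (List Bool) (fun a b => Classical.propDecidable (a = b)) Y Finset.univ), pr μ (fun ω => Y ω = y) *
        (Real.logb 2 (pr μ (fun ω => Y ω = y))
          + (y.length : ℝ) * Real.logb 2 ((p1 + p3) ^ 2 + (p2 + p4) ^ 2))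
      = (∑ y ∈ (@Finset.image Ω (List Bool) (fun a b => Classical.propDecidable (a = b)) Y Finset.univ),
          pr μ (fun ω => Y ω = y) * Real.logb 2 (pr μ (fun ω => Y ω = y)))
        + (∑ y ∈ (@Finset.image Ω (List Bool) (fun a b => Classical.propDecidable (a = b)) Y Finset.univ), pr μ (fun ω => Y ω = y) * ((y.length : ℕ) : ℝ))
          * Real.logb 2 ((p1 + p3) ^ 2 + (p2 + p4) ^ 2) := by
    rw [Finset.sum_mul, ← Finset.sum_add_distrib]
    exact Finset.sum_congr rfl fun y _ => by ring
  rw [ge_iff_le, entropy, entropy, hexp]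
  rw [expand] at hS
  linarith

end
end

section
/- Let q ≥ 3 be odd, let p_k ≥ 0 for k ∈ {−(q−1)/2, …, (q−1)/2} with ∑_k p_k = 1, and let W be the binary input symmetric q-ary output kernel with output alphabet K. Let X be a random variable with finitely many values, Y a random variable taking finitely many values in lists over {−1,+1}, and Y^(q) a random variable taking values in lists over K with |Y^(q)| = |Y| pointwise, such that P(Y^(q)=y′ | X=x, Y=y) = ∏_{i=1}^{|y|} W(y_i, y′_i) whenever P(X=x, Y=y) > 0 and |y′| = |y|. Then I(X; Y^(q)) ≥ I(X; Y) − E[|Y|] · [ H(p_{−(q−1)/2}, …, p_{(q−1)/2}) + log₂( 2p_0² + ∑_{k=1}^{(q−1)/2} (p_k + p_{−k})² ) ], where H(p_{−(q−1)/2}, …, p_{(q−1)/2}) = −∑_k p_k log₂ p_k. -/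
open scoped BigOperators
open Classical

noncomputable section

variable {Ω : Type*} [Fintype Ω]

/-- For odd `q`, the output alphabet `K = {−(q−1)/2, …, (q−1)/2} ⊆ ℤ`. -/
def Kodd (q : ℕ) : Finset ℤ := Finset.Icc (-(((q - 1) / 2 : ℕ) : ℤ)) (((q - 1) / 2 : ℕ) : ℤ)

/-- The input alphabet `{−1, +1} ⊆ ℤ`. -/
def pmOne : Finset ℤ := {-1, 1}

lemma pr_pos_elim (μ : FinProb Ω) {E : Ω → Prop} (h : 0 < pr μ E) :
    ∃ ω, 0 < μ.p ω ∧ E ω := by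
  by_contra hc
  push_neg at hc
  have : pr μ E = 0 := by
    apply Finset.sum_eq_zero
    intro ω _
    by_cases hE : E ω
    · have h1 := μ.nonneg ω
      have h2 := hc ω
      have : ¬ (0 < μ.p ω) := fun hlt => (h2 hlt) hE
      simp [hE, le_antisymm (not_lt.1 this) h1]
    · simp [hE]
  linarith

lemma pr_partition {S : Type*} (μ : FinProb Ω) (U : Ω → S) (E : Ω → Prop) :
    ∑ u ∈ Finset.univ.image U, pr μ (fun ω => U ω = u ∧ E ω) = pr μ E := by
  unfold pr
  rw [Finset.sum_comm]
  apply Finset.sum_congr rfl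
  intro ω _
  by_cases hE : E ω
  · rw [Finset.sum_eq_single (U ω)]
    · simp [hE]
    · intro u _ hu
      have hne : ¬(U ω = u ∧ E ω) := fun hcon => hu hcon.1.symm
      simp [hne]
    · intro h; exact absurd (Finset.mem_image_of_mem U (Finset.mem_univ ω)) h
  · simp [hE]

-- ==================== condEntropy as a double sum ====================

lemma condEntropy_eq {S T : Type*} (μ : FinProb Ω) (U : Ω → S) (V : Ω → T) :
    condEntropy μ U V = ∑ v ∈ Finset.univ.image V, ∑ u ∈ Finset.univ.image U,
      -(pr μ (fun ω => U ω = u ∧ V ω = v) *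
        Real.logb 2 (pr μ (fun ω => U ω = u ∧ V ω = v) / pr μ (fun ω => V ω = v))) := by
  unfold condEntropy
  rw [← Finset.sum_filter_add_sum_filter_not (Finset.univ.image V)
      (fun v => 0 < pr μ (fun ω => V ω = v))]
  have h2 : ∑ v ∈ (Finset.univ.image V).filter
      (fun v => ¬ 0 < pr μ (fun ω => V ω = v)), ∑ u ∈ Finset.univ.image U,
      -(pr μ (fun ω => U ω = u ∧ V ω = v) *
        Real.logb 2 (pr μ (fun ω => U ω = u ∧ V ω = v) / pr μ (fun ω => V ω = v))) = 0 := by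
    apply Finset.sum_eq_zero
    intro v hv
    rw [Finset.mem_filter] at hv
    have hv0 : pr μ (fun ω => V ω = v) = 0 :=
      le_antisymm (not_lt.1 hv.2) (pr_nonneg μ _)
    apply Finset.sum_eq_zero
    intro u _
    have huv : pr μ (fun ω => U ω = u ∧ V ω = v) = 0 :=
      le_antisymm (hv0 ▸ pr_mono μ (fun ω h => h.2)) (pr_nonneg μ _)
    simp [huv]
  rw [h2, add_zero]
  apply Finset.sum_congr rfl
  intro v hv
  rw [Finset.mem_filter] at hv
  have hv0 : pr μ (fun ω => V ω = v) ≠ 0 := ne_of_gt hv.2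
  rw [mul_neg, Finset.mul_sum, ← Finset.sum_neg_distrib]
  apply Finset.sum_congr rfl
  intro u _
  congr 1
  rw [← mul_assoc]
  congr 1
  field_simp

-- ==================== pointwise Gibbs bound ====================

lemma log2_pos : 0 < Real.log 2 := Real.log_pos (by norm_num)

lemma gibbs_pointwise (a b c : ℝ) (ha : 0 ≤ a) (hb : 0 < b) (hc : 0 ≤ c)
    (hac : 0 < a → 0 < c) :
    -(a * Real.logb 2 (a / b)) - a * (-Real.logb 2 c) ≤ (c - a / b) * b / Real.log 2 := by
  rcases eq_or_lt_of_le ha with h0 | hapos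
  · rw [← h0]
    simp only [zero_mul, neg_zero, zero_div, sub_zero, zero_sub, neg_zero, zero_mul]
    have : 0 ≤ c * b / Real.log 2 := by positivity
    simpa using this
  · have hcpos : 0 < c := hac hapos
    have habpos : 0 < a / b := div_pos hapos hb
    have key : a * (Real.logb 2 c - Real.logb 2 (a / b)) ≤ (c - a / b) * b / Real.log 2 := by
      rw [← Real.logb_div (ne_of_gt hcpos) (ne_of_gt habpos)]
      have hq : 0 < c / (a / b) := div_pos hcpos habpos
      rw [Real.logb, div_eq_mul_inv, ← mul_assoc]
      have hlog := Real.log_le_sub_one_of_pos hq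
      have h1 : a * Real.log (c / (a / b)) ≤ a * (c / (a / b) - 1) :=
        mul_le_mul_of_nonneg_left hlog ha
      have h2 : a * (c / (a / b) - 1) = (c - a / b) * b := by
        field_simp
      calc a * Real.log (c / (a / b)) * (Real.log 2)⁻¹
          ≤ a * (c / (a / b) - 1) * (Real.log 2)⁻¹ := by
            apply mul_le_mul_of_nonneg_right h1 (by positivity)
        _ = (c - a / b) * b / Real.log 2 := by rw [h2]; ring
    nlinarith [key]

-- ==================== master Gibbs (cross-entropy) lemma ====================

lemma gibbs {S T : Type*} (μ : FinProb Ω) (U : Ω → S) (V : Ω → T) (Q : S → T → ℝ)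
    (hQ0 : ∀ u v, 0 ≤ Q u v)
    (hQ1 : ∀ v, ∑ u ∈ Finset.univ.image U, Q u v ≤ 1)
    (hpos : ∀ u v, 0 < pr μ (fun ω => U ω = u ∧ V ω = v) → 0 < Q u v) :
    condEntropy μ U V ≤ ∑ v ∈ Finset.univ.image V, ∑ u ∈ Finset.univ.image U,
      pr μ (fun ω => U ω = u ∧ V ω = v) * (-Real.logb 2 (Q u v)) := by
  rw [condEntropy_eq]
  apply Finset.sum_le_sum
  intro v _
  by_cases hv : 0 < pr μ (fun ω => V ω = v)
  · have hsum : ∑ u ∈ Finset.univ.image U, pr μ (fun ω => U ω = u ∧ V ω = v)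
        = pr μ (fun ω => V ω = v) := pr_partition μ U _
    have hbound : ∀ u ∈ Finset.univ.image U,
        -(pr μ (fun ω => U ω = u ∧ V ω = v) *
          Real.logb 2 (pr μ (fun ω => U ω = u ∧ V ω = v) / pr μ (fun ω => V ω = v)))
        - pr μ (fun ω => U ω = u ∧ V ω = v) * (-Real.logb 2 (Q u v))
        ≤ (Q u v - pr μ (fun ω => U ω = u ∧ V ω = v) / pr μ (fun ω => V ω = v)) *
            pr μ (fun ω => V ω = v) / Real.log 2 := by
      intro u _
      exact gibbs_pointwise _ _ _ (pr_nonneg μ _) hv (hQ0 u v) (hpos u v)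
    have hsum2 : ∑ u ∈ Finset.univ.image U,
        ((Q u v - pr μ (fun ω => U ω = u ∧ V ω = v) / pr μ (fun ω => V ω = v)) *
          pr μ (fun ω => V ω = v) / Real.log 2) ≤ 0 := by
      rw [← Finset.sum_div, ← Finset.sum_mul, Finset.sum_sub_distrib, ← Finset.sum_div, hsum,
        div_self (ne_of_gt hv)]
      have h1 : ∑ u ∈ Finset.univ.image U, Q u v - 1 ≤ 0 := by linarith [hQ1 v]
      have : (∑ u ∈ Finset.univ.image U, Q u v - 1) * pr μ (fun ω => V ω = v) ≤ 0 :=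
        mul_nonpos_of_nonpos_of_nonneg h1 (le_of_lt hv)
      exact div_nonpos_of_nonpos_of_nonneg this (le_of_lt log2_pos)
    have := Finset.sum_le_sum hbound
    rw [Finset.sum_sub_distrib] at this
    linarith [this, hsum2]
  · have hv0 : pr μ (fun ω => V ω = v) = 0 := le_antisymm (not_lt.1 hv) (pr_nonneg μ _)
    apply Finset.sum_le_sum
    intro u _
    have huv : pr μ (fun ω => U ω = u ∧ V ω = v) = 0 :=
      le_antisymm (hv0 ▸ pr_mono μ (fun ω h => h.2)) (pr_nonneg μ _)
    simp [huv]

lemma pr_partition' {S : Type*} (μ : FinProb Ω) (U : Ω → S) (E : Ω → Prop) :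
    ∑ u ∈ Finset.univ.image U, pr μ (fun ω => E ω ∧ U ω = u) = pr μ E := by
  rw [← pr_partition μ U E]
  exact Finset.sum_congr rfl fun u _ => pr_congr μ fun ω => and_comm

lemma sum_pos_elim {α : Type*} {s : Finset α} {f : α → ℝ} (h : 0 < ∑ a ∈ s, f a) :
    ∃ a ∈ s, 0 < f a := by
  by_contra hc
  push_neg at hc
  have : ∑ a ∈ s, f a ≤ 0 := Finset.sum_nonpos hc
  linarith


lemma condEntropy_triangle {S T R : Type*} (μ : FinProb Ω)
    (X : Ω → S) (Y : Ω → T) (Z : Ω → R) :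
    condEntropy μ X Z ≤ condEntropy μ X Y + condEntropy μ Y Z := by
  classical
  set Q : S → R → ℝ := fun x z => ∑ y ∈ Finset.univ.image Y,
    (pr μ (fun ω => X ω = x ∧ Y ω = y) * pr μ (fun ω => Y ω = y ∧ Z ω = z)) /
      (pr μ (fun ω => Y ω = y) * pr μ (fun ω => Z ω = z)) with hQdef
  have hQ_ge : ∀ x z y, y ∈ Finset.univ.image Y →
      (pr μ (fun ω => X ω = x ∧ Y ω = y) * pr μ (fun ω => Y ω = y ∧ Z ω = z)) /
        (pr μ (fun ω => Y ω = y) * pr μ (fun ω => Z ω = z)) ≤ Q x z := by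
    intro x z y hy
    exact Finset.single_le_sum
      (f := fun y' => (pr μ (fun ω => X ω = x ∧ Y ω = y') *
          pr μ (fun ω => Y ω = y' ∧ Z ω = z)) /
        (pr μ (fun ω => Y ω = y') * pr μ (fun ω => Z ω = z)))
      (fun y' _ => div_nonneg (mul_nonneg (pr_nonneg μ _) (pr_nonneg μ _))
        (mul_nonneg (pr_nonneg μ _) (pr_nonneg μ _))) hy
  have hQ0 : ∀ x z, 0 ≤ Q x z := fun x z =>
    Finset.sum_nonneg fun y _ => div_nonneg
      (mul_nonneg (pr_nonneg μ _) (pr_nonneg μ _))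
      (mul_nonneg (pr_nonneg μ _) (pr_nonneg μ _))
  have hQ1 : ∀ z, ∑ x ∈ Finset.univ.image X, Q x z ≤ 1 := by
    intro z
    rw [Finset.sum_comm]
    have hterm : ∀ y ∈ Finset.univ.image Y,
        ∑ x ∈ Finset.univ.image X,
          (pr μ (fun ω => X ω = x ∧ Y ω = y) * pr μ (fun ω => Y ω = y ∧ Z ω = z)) /
            (pr μ (fun ω => Y ω = y) * pr μ (fun ω => Z ω = z))
        = pr μ (fun ω => Y ω = y ∧ Z ω = z) / pr μ (fun ω => Z ω = z) := by
      intro y _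
      have h5 : ∀ x, (pr μ (fun ω => X ω = x ∧ Y ω = y) * pr μ (fun ω => Y ω = y ∧ Z ω = z)) /
            (pr μ (fun ω => Y ω = y) * pr μ (fun ω => Z ω = z))
          = pr μ (fun ω => X ω = x ∧ Y ω = y) *
            (pr μ (fun ω => Y ω = y ∧ Z ω = z) /
              (pr μ (fun ω => Y ω = y) * pr μ (fun ω => Z ω = z))) := by
        intro x; rw [mul_div_assoc]
      rw [Finset.sum_congr rfl (fun x _ => h5 x), ← Finset.sum_mul, pr_partition μ X]
      rcases eq_or_ne (pr μ (fun ω => Y ω = y)) 0 with h | h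
      · have hyz : pr μ (fun ω => Y ω = y ∧ Z ω = z) = 0 :=
          le_antisymm (h ▸ pr_mono μ (fun ω hh => hh.1)) (pr_nonneg μ _)
        simp [h, hyz]
      · rw [div_mul_eq_div_div_swap, mul_comm, div_mul_cancel₀ _ h]
    rw [Finset.sum_congr rfl hterm, ← Finset.sum_div, pr_partition μ Y]
    rcases eq_or_ne (pr μ (fun ω => Z ω = z)) 0 with h | h
    · simp [h]
    · rw [div_self h]
  have hpos : ∀ x z, 0 < pr μ (fun ω => X ω = x ∧ Z ω = z) → 0 < Q x z := by
    intro x z hxz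
    rw [← pr_partition μ Y (fun ω => X ω = x ∧ Z ω = z)] at hxz
    obtain ⟨y, hymem, hy⟩ := sum_pos_elim hxz
    have h1 : 0 < pr μ (fun ω => X ω = x ∧ Y ω = y) :=
      lt_of_lt_of_le hy (pr_mono μ (fun ω h => ⟨h.2.1, h.1⟩))
    have h2 : 0 < pr μ (fun ω => Y ω = y ∧ Z ω = z) :=
      lt_of_lt_of_le hy (pr_mono μ (fun ω h => ⟨h.1, h.2.2⟩))
    have h3 : 0 < pr μ (fun ω => Y ω = y) :=
      lt_of_lt_of_le h2 (pr_mono μ (fun ω h => h.1))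
    have h4 : 0 < pr μ (fun ω => Z ω = z) :=
      lt_of_lt_of_le h2 (pr_mono μ (fun ω h => h.2))
    exact lt_of_lt_of_le (div_pos (mul_pos h1 h2) (mul_pos h3 h4)) (hQ_ge x z y hymem)
  have hmain := gibbs μ X Z Q hQ0 hQ1 hpos
  have hstep2 : ∑ z ∈ Finset.univ.image Z, ∑ x ∈ Finset.univ.image X,
      pr μ (fun ω => X ω = x ∧ Z ω = z) * (-Real.logb 2 (Q x z))
      ≤ ∑ z ∈ Finset.univ.image Z, ∑ x ∈ Finset.univ.image X, ∑ y ∈ Finset.univ.image Y,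
        pr μ (fun ω => Y ω = y ∧ X ω = x ∧ Z ω = z) *
          ((-Real.logb 2 (pr μ (fun ω => X ω = x ∧ Y ω = y) / pr μ (fun ω => Y ω = y))) +
           (-Real.logb 2 (pr μ (fun ω => Y ω = y ∧ Z ω = z) / pr μ (fun ω => Z ω = z)))) := by
    apply Finset.sum_le_sum; intro z _
    apply Finset.sum_le_sum; intro x _
    rw [← pr_partition μ Y (fun ω => X ω = x ∧ Z ω = z), Finset.sum_mul]
    apply Finset.sum_le_sum; intro y hy
    rcases eq_or_lt_of_le (pr_nonneg μ (fun ω => Y ω = y ∧ X ω = x ∧ Z ω = z)) with h0 | hpos'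
    · rw [← h0]; simp
    · have h1 : 0 < pr μ (fun ω => X ω = x ∧ Y ω = y) :=
        lt_of_lt_of_le hpos' (pr_mono μ (fun ω h => ⟨h.2.1, h.1⟩))
      have h2 : 0 < pr μ (fun ω => Y ω = y ∧ Z ω = z) :=
        lt_of_lt_of_le hpos' (pr_mono μ (fun ω h => ⟨h.1, h.2.2⟩))
      have h3 : 0 < pr μ (fun ω => Y ω = y) :=
        lt_of_lt_of_le h2 (pr_mono μ (fun ω h => h.1))
      have h4 : 0 < pr μ (fun ω => Z ω = z) :=
        lt_of_lt_of_le h2 (pr_mono μ (fun ω h => h.2))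
      apply mul_le_mul_of_nonneg_left _ (le_of_lt hpos')
      have hA : 0 < pr μ (fun ω => X ω = x ∧ Y ω = y) / pr μ (fun ω => Y ω = y) :=
        div_pos h1 h3
      have hB : 0 < pr μ (fun ω => Y ω = y ∧ Z ω = z) / pr μ (fun ω => Z ω = z) :=
        div_pos h2 h4
      have hprod : (pr μ (fun ω => X ω = x ∧ Y ω = y) / pr μ (fun ω => Y ω = y)) *
          (pr μ (fun ω => Y ω = y ∧ Z ω = z) / pr μ (fun ω => Z ω = z)) ≤ Q x z := by
        rw [div_mul_div_comm]
        obtain ⟨ω, _, hωy⟩ := pr_pos_elim μ h3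
        exact hQ_ge x z y (hωy ▸ Finset.mem_image_of_mem Y (Finset.mem_univ ω))
      have hlog : Real.logb 2 ((pr μ (fun ω => X ω = x ∧ Y ω = y) / pr μ (fun ω => Y ω = y)) *
          (pr μ (fun ω => Y ω = y ∧ Z ω = z) / pr μ (fun ω => Z ω = z))) ≤ Real.logb 2 (Q x z) :=
        (Real.logb_le_logb one_lt_two (mul_pos hA hB) (lt_of_lt_of_le (mul_pos hA hB) hprod)).2 hprod
      rw [Real.logb_mul (ne_of_gt hA) (ne_of_gt hB)] at hlog
      linarith
  have hAid : ∑ z ∈ Finset.univ.image Z, ∑ x ∈ Finset.univ.image X, ∑ y ∈ Finset.univ.image Y,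
      pr μ (fun ω => Y ω = y ∧ X ω = x ∧ Z ω = z) *
        (-Real.logb 2 (pr μ (fun ω => X ω = x ∧ Y ω = y) / pr μ (fun ω => Y ω = y)))
      = condEntropy μ X Y := by
    calc ∑ z ∈ Finset.univ.image Z, ∑ x ∈ Finset.univ.image X, ∑ y ∈ Finset.univ.image Y,
        pr μ (fun ω => Y ω = y ∧ X ω = x ∧ Z ω = z) *
          (-Real.logb 2 (pr μ (fun ω => X ω = x ∧ Y ω = y) / pr μ (fun ω => Y ω = y)))
        = ∑ x ∈ Finset.univ.image X, ∑ z ∈ Finset.univ.image Z, ∑ y ∈ Finset.univ.image Y,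
          pr μ (fun ω => Y ω = y ∧ X ω = x ∧ Z ω = z) *
            (-Real.logb 2 (pr μ (fun ω => X ω = x ∧ Y ω = y) / pr μ (fun ω => Y ω = y))) :=
        Finset.sum_comm
      _ = ∑ x ∈ Finset.univ.image X, ∑ y ∈ Finset.univ.image Y, ∑ z ∈ Finset.univ.image Z,
          pr μ (fun ω => Y ω = y ∧ X ω = x ∧ Z ω = z) *
            (-Real.logb 2 (pr μ (fun ω => X ω = x ∧ Y ω = y) / pr μ (fun ω => Y ω = y))) :=
        Finset.sum_congr rfl fun x _ => Finset.sum_comm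
      _ = ∑ x ∈ Finset.univ.image X, ∑ y ∈ Finset.univ.image Y,
          pr μ (fun ω => X ω = x ∧ Y ω = y) *
            (-Real.logb 2 (pr μ (fun ω => X ω = x ∧ Y ω = y) / pr μ (fun ω => Y ω = y))) := by
        apply Finset.sum_congr rfl; intro x _
        apply Finset.sum_congr rfl; intro y _
        rw [← Finset.sum_mul]
        congr 1
        rw [Finset.sum_congr rfl (fun z _ => pr_congr μ
          (fun ω => (and_assoc :
            ((Y ω = y ∧ X ω = x) ∧ Z ω = z) ↔ (Y ω = y ∧ X ω = x ∧ Z ω = z)).symm)),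
          pr_partition' μ Z (fun ω => Y ω = y ∧ X ω = x)]
        exact pr_congr μ fun ω => and_comm
      _ = condEntropy μ X Y := by
        rw [condEntropy_eq μ X Y, Finset.sum_comm]
        apply Finset.sum_congr rfl; intro x _
        apply Finset.sum_congr rfl; intro y _
        ring
  have hBid : ∑ z ∈ Finset.univ.image Z, ∑ x ∈ Finset.univ.image X, ∑ y ∈ Finset.univ.image Y,
      pr μ (fun ω => Y ω = y ∧ X ω = x ∧ Z ω = z) *
        (-Real.logb 2 (pr μ (fun ω => Y ω = y ∧ Z ω = z) / pr μ (fun ω => Z ω = z)))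
      = condEntropy μ Y Z := by
    calc ∑ z ∈ Finset.univ.image Z, ∑ x ∈ Finset.univ.image X, ∑ y ∈ Finset.univ.image Y,
        pr μ (fun ω => Y ω = y ∧ X ω = x ∧ Z ω = z) *
          (-Real.logb 2 (pr μ (fun ω => Y ω = y ∧ Z ω = z) / pr μ (fun ω => Z ω = z)))
        = ∑ z ∈ Finset.univ.image Z, ∑ y ∈ Finset.univ.image Y, ∑ x ∈ Finset.univ.image X,
          pr μ (fun ω => Y ω = y ∧ X ω = x ∧ Z ω = z) *
            (-Real.logb 2 (pr μ (fun ω => Y ω = y ∧ Z ω = z) / pr μ (fun ω => Z ω = z))) :=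
        Finset.sum_congr rfl fun z _ => Finset.sum_comm
      _ = ∑ z ∈ Finset.univ.image Z, ∑ y ∈ Finset.univ.image Y,
          pr μ (fun ω => Y ω = y ∧ Z ω = z) *
            (-Real.logb 2 (pr μ (fun ω => Y ω = y ∧ Z ω = z) / pr μ (fun ω => Z ω = z))) := by
        apply Finset.sum_congr rfl; intro z _
        apply Finset.sum_congr rfl; intro y _
        rw [← Finset.sum_mul]
        congr 1
        rw [Finset.sum_congr rfl (fun x _ => pr_congr μ
          (fun ω => (show (Y ω = y ∧ X ω = x ∧ Z ω = z) ↔ (X ω = x ∧ Y ω = y ∧ Z ω = z)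
            by tauto))),
          pr_partition μ X (fun ω => Y ω = y ∧ Z ω = z)]
      _ = condEntropy μ Y Z := by
        rw [condEntropy_eq μ Y Z]
        apply Finset.sum_congr rfl; intro z _
        apply Finset.sum_congr rfl; intro y _
        ring
  have hsplit : ∑ z ∈ Finset.univ.image Z, ∑ x ∈ Finset.univ.image X, ∑ y ∈ Finset.univ.image Y,
      pr μ (fun ω => Y ω = y ∧ X ω = x ∧ Z ω = z) *
        ((-Real.logb 2 (pr μ (fun ω => X ω = x ∧ Y ω = y) / pr μ (fun ω => Y ω = y))) +
         (-Real.logb 2 (pr μ (fun ω => Y ω = y ∧ Z ω = z) / pr μ (fun ω => Z ω = z))))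
      = condEntropy μ X Y + condEntropy μ Y Z := by
    simp only [mul_add, Finset.sum_add_distrib]
    rw [hAid, hBid]
  linarith [hmain, hstep2, hsplit.le, hsplit.ge]

-- ==================== misc small lemmas ====================

lemma image_congr_inst {α β : Type*} [Fintype α] (i1 i2 : DecidableEq β) (f : α → β) :
    @Finset.image α β i1 f Finset.univ = @Finset.image α β i2 f Finset.univ := by
  have h : i1 = i2 := Subsingleton.elim _ _
  rw [h]

lemma pr_false_s16 (μ : FinProb Ω) {E : Ω → Prop} (h : ∀ ω, ¬ E ω) : pr μ E = 0 :=
  Finset.sum_eq_zero fun ω _ => by simp [h ω]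

lemma expLen_eq {A : Type*} (μ : FinProb Ω) (Y : Ω → List A) :
    expLen μ Y = ∑ y ∈ Finset.univ.image Y, pr μ (fun ω => Y ω = y) * (y.length : ℝ) := by
  unfold expLen pr
  rw [Finset.sum_congr rfl (fun y _ => Finset.sum_mul _ _ _), Finset.sum_comm]
  apply Finset.sum_congr rfl
  intro ω _
  rw [Finset.sum_eq_single (Y ω)]
  · simp
  · intro y _ hy
    have : ¬ (Y ω = y) := fun hh => hy hh.symm
    simp [this]
  · intro h; exact absurd (Finset.mem_image_of_mem Y (Finset.mem_univ ω)) h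

-- Jensen for logb
lemma jensen_logb {α : Type*} (s : Finset α) (w x : α → ℝ)
    (hw : ∀ i ∈ s, 0 ≤ w i) (hw1 : ∑ i ∈ s, w i = 1)
    (hx : ∀ i ∈ s, 0 ≤ x i) (hpos : ∀ i ∈ s, w i ≠ 0 → 0 < x i) :
    ∑ i ∈ s, w i * Real.logb 2 (x i) ≤ Real.logb 2 (∑ i ∈ s, w i * x i) := by
  set T := ∑ i ∈ s, w i * x i with hT
  have hTnn : ∀ i ∈ s, 0 ≤ w i * x i := fun i hi => mul_nonneg (hw i hi) (hx i hi)
  have hTpos : 0 < T := by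
    obtain ⟨i, hi, hwi⟩ : ∃ i ∈ s, 0 < w i := by
      by_contra hc
      push_neg at hc
      have : ∑ i ∈ s, w i = 0 :=
        Finset.sum_eq_zero fun i hi => le_antisymm (hc i hi) (hw i hi)
      rw [this] at hw1; norm_num at hw1
    have hxi : 0 < x i := hpos i hi (ne_of_gt hwi)
    exact lt_of_lt_of_le (mul_pos hwi hxi) (Finset.single_le_sum hTnn hi)
  have key : ∀ i ∈ s, w i * Real.logb 2 (x i) - w i * Real.logb 2 T
      ≤ (w i * x i / T - w i) / Real.log 2 := by
    intro i hi
    rcases eq_or_lt_of_le (hw i hi) with h0 | hwi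
    · rw [← h0]; simp
    · have hxi : 0 < x i := hpos i hi (ne_of_gt hwi)
      have : Real.logb 2 (x i) - Real.logb 2 T = Real.logb 2 (x i / T) :=
        (Real.logb_div (ne_of_gt hxi) (ne_of_gt hTpos)).symm
      have hlog : Real.log (x i / T) ≤ x i / T - 1 :=
        Real.log_le_sub_one_of_pos (div_pos hxi hTpos)
      have h2 : w i * Real.logb 2 (x i) - w i * Real.logb 2 T
          = w i * (Real.log (x i / T) / Real.log 2) := by
        rw [← mul_sub, this, Real.logb]
      rw [h2]
      rw [div_eq_mul_inv, ← mul_assoc]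
      rw [show (w i * x i / T - w i) / Real.log 2 = w i * (x i / T - 1) * (Real.log 2)⁻¹ by
        field_simp]
      apply mul_le_mul_of_nonneg_right _ (by positivity)
      exact mul_le_mul_of_nonneg_left hlog (le_of_lt hwi)
  have hsum := Finset.sum_le_sum key
  rw [Finset.sum_sub_distrib, ← Finset.sum_mul, hw1, one_mul] at hsum
  have hrhs : ∑ i ∈ s, (w i * x i / T - w i) / Real.log 2 = 0 := by
    rw [← Finset.sum_div, Finset.sum_sub_distrib, ← Finset.sum_div, hw1, ← hT,
      div_self (ne_of_gt hTpos)]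
    norm_num
  linarith

-- negation reindexing on Kodd
lemma sum_Kodd_neg (q : ℕ) (f : ℤ → ℝ) :
    ∑ k ∈ Kodd q, f (-k) = ∑ k ∈ Kodd q, f k := by
  apply Finset.sum_nbij' (i := fun k => -k) (j := fun k => -k)
  · intro a ha; simp only [Kodd, Finset.mem_Icc] at *; omega
  · intro a ha; simp only [Kodd, Finset.mem_Icc] at *; omega
  · intro a _; ring
  · intro a _; ring
  · intro a _; rfl

lemma Kodd_neg_mem {q : ℕ} {k : ℤ} (h : k ∈ Kodd q) : -k ∈ Kodd q := by
  simp only [Kodd, Finset.mem_Icc] at *; omega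

lemma pmOne_cases {b : ℤ} (h : b ∈ pmOne) : b = -1 ∨ b = 1 := by
  simpa [pmOne] using h

lemma Kodd_mul_mem {q : ℕ} {k b : ℤ} (hk : k ∈ Kodd q) (hb : b ∈ pmOne) :
    k * b ∈ Kodd q := by
  rcases pmOne_cases hb with h | h <;> subst h
  · simpa using Kodd_neg_mem hk
  · simpa using hk

-- row sums of the kernel
lemma row_sum (q : ℕ) (p : ℤ → ℝ) (hp1 : ∑ k ∈ Kodd q, p k = 1) {b : ℤ} (hb : b ∈ pmOne) :
    ∑ k ∈ Kodd q, p (k * b) = 1 := by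
  rcases pmOne_cases hb with h | h <;> subst h
  · rw [← hp1, ← sum_Kodd_neg q p]
    apply Finset.sum_congr rfl; intro k _; ring_nf
  · simpa using hp1

-- the Z quantity
lemma Z_algebra (q : ℕ) (hq3 : 3 ≤ q) (p : ℤ → ℝ) :
    ∑ k ∈ Kodd q, p k * (p k + p (-k)) =
      2 * p 0 ^ 2 + ∑ k ∈ Finset.Icc (1 : ℤ) (((q - 1) / 2 : ℕ) : ℤ), (p k + p (-k)) ^ 2 := by
  set m : ℤ := (((q - 1) / 2 : ℕ) : ℤ) with hm
  have hm1 : 1 ≤ m := by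
    have : 1 ≤ (q - 1) / 2 := by omega
    omega
  have hsplit : Kodd q = Finset.Icc (-m) (-1) ∪ (insert 0 (Finset.Icc 1 m)) := by
    ext k
    simp only [Kodd, Finset.mem_Icc, Finset.mem_union, Finset.mem_insert, ← hm]
    omega
  have hdisj : Disjoint (Finset.Icc (-m) (-1)) (insert 0 (Finset.Icc 1 m)) := by
    rw [Finset.disjoint_left]
    intro k hk hk2
    simp only [Finset.mem_Icc, Finset.mem_insert] at *
    omega
  have h0 : (0:ℤ) ∉ Finset.Icc (1:ℤ) m := by simp
  rw [hsplit, Finset.sum_union hdisj, Finset.sum_insert h0]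
  have hneg : ∑ k ∈ Finset.Icc (-m) (-1), p k * (p k + p (-k))
      = ∑ k ∈ Finset.Icc (1:ℤ) m, p (-k) * (p (-k) + p k) := by
    apply Finset.sum_nbij' (i := fun k => -k) (j := fun k => -k)
    · intro a ha; simp only [Finset.mem_Icc] at *; omega
    · intro a ha; simp only [Finset.mem_Icc] at *; omega
    · intro a _; ring
    · intro a _; ring
    · intro a _; simp
  rw [hneg]
  have hcomb : ∑ k ∈ Finset.Icc (1:ℤ) m, p (-k) * (p (-k) + p k)
      + ∑ k ∈ Finset.Icc (1:ℤ) m, p k * (p k + p (-k))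
      = ∑ k ∈ Finset.Icc (1:ℤ) m, (p k + p (-k)) ^ 2 := by
    rw [← Finset.sum_add_distrib]
    apply Finset.sum_congr rfl
    intro k _; ring
  have h00 : p 0 * (p 0 + p (-0)) = 2 * p 0 ^ 2 := by norm_num; ring
  linarith [hcomb, h00]

-- ==================== the reverse channel rho ====================

def rho (p : ℤ → ℝ) (b k : ℤ) : ℝ :=
  if 0 < p k + p (-k) then p (k * b) / (p k + p (-k)) else 1/2

lemma rho_nonneg {q : ℕ} {p : ℤ → ℝ} (hp0 : ∀ k ∈ Kodd q, 0 ≤ p k)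
    {b k : ℤ} (hb : b ∈ pmOne) (hk : k ∈ Kodd q) : 0 ≤ rho p b k := by
  unfold rho; split
  · exact div_nonneg (hp0 _ (Kodd_mul_mem hk hb)) (le_of_lt ‹_›)
  · norm_num

lemma rho_le_one {q : ℕ} {p : ℤ → ℝ} (hp0 : ∀ k ∈ Kodd q, 0 ≤ p k)
    {b k : ℤ} (hb : b ∈ pmOne) (hk : k ∈ Kodd q) : rho p b k ≤ 1 := by
  unfold rho; split
  · rename_i hs
    apply div_le_one_of_le₀ _ (le_of_lt hs)
    rcases pmOne_cases hb with h | h <;> subst h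
    · rw [mul_neg_one]
      have := hp0 k hk
      linarith
    · rw [mul_one]
      have := hp0 _ (Kodd_neg_mem hk)
      linarith
  · norm_num

lemma rho_pos {q : ℕ} {p : ℤ → ℝ} (hp0 : ∀ k ∈ Kodd q, 0 ≤ p k)
    {b k : ℤ} (hb : b ∈ pmOne) (hk : k ∈ Kodd q) (hpkb : 0 < p (k * b)) :
    0 < rho p b k := by
  have hs : 0 < p k + p (-k) := by
    rcases pmOne_cases hb with h | h <;> subst h
    · rw [mul_neg_one] at hpkb
      have := hp0 k hk
      linarith
    · rw [mul_one] at hpkb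
      have := hp0 _ (Kodd_neg_mem hk)
      linarith
  unfold rho
  rw [if_pos hs]
  exact div_pos hpkb hs

lemma rho_sum (p : ℤ → ℝ) (k : ℤ) : rho p (-1) k + rho p 1 k = 1 := by
  unfold rho
  split
  · rename_i hs
    rw [mul_neg_one, mul_one, ← add_div, add_comm (p (-k)), div_self (ne_of_gt hs)]
  · norm_num

-- ==================== the per-symbol entropy bound ====================

lemma rho_neg (p : ℤ → ℝ) (k : ℤ) : rho p 1 (-k) = rho p (-1) k := by
  unfold rho
  have h1 : p (-k) + p (- -k) = p k + p (-k) := by rw [neg_neg]; ring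
  have h2 : -k * 1 = k * -1 := by ring
  rw [h1, h2]

lemma per_symbol_core (q : ℕ) (hq3 : 3 ≤ q) (p : ℤ → ℝ)
    (hp0 : ∀ k ∈ Kodd q, 0 ≤ p k) (hp1 : ∑ k ∈ Kodd q, p k = 1) :
    ∑ k ∈ Kodd q, p k * (-Real.logb 2 (rho p 1 k)) ≤
      (-∑ k ∈ Kodd q, p k * Real.logb 2 (p k)) +
        Real.logb 2 (2 * p 0 ^ 2 +
          ∑ k ∈ Finset.Icc (1 : ℤ) (((q - 1) / 2 : ℕ) : ℤ), (p k + p (-k)) ^ 2) := by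
  have hstep1 : ∑ k ∈ Kodd q, p k * (-Real.logb 2 (rho p 1 k))
      = ∑ k ∈ Kodd q, (-(p k * Real.logb 2 (p k)) + p k * Real.logb 2 (p k + p (-k))) := by
    apply Finset.sum_congr rfl
    intro k hk
    unfold rho
    rw [mul_one]
    by_cases hs : 0 < p k + p (-k)
    · rw [if_pos hs]
      rcases eq_or_lt_of_le (hp0 k hk) with h0 | hpk
      · rw [← h0]; simp
      · rw [Real.logb_div (ne_of_gt hpk) (ne_of_gt hs)]
        ring
    · rw [if_neg hs]
      have h1 : p k = 0 := by
        have := hp0 k hk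
        have := hp0 _ (Kodd_neg_mem hk)
        have : ¬ (0 < p k + p (-k)) := hs
        push_neg at this
        linarith
      simp [h1]
  rw [hstep1, Finset.sum_add_distrib]
  apply add_le_add
  · rw [Finset.sum_neg_distrib]
  · have hjen := jensen_logb (Kodd q) p (fun k => p k + p (-k)) hp0 hp1
      (fun k hk => by
        have h1 := hp0 k hk
        have h2 := hp0 _ (Kodd_neg_mem hk)
        show (0:ℝ) ≤ p k + p (-k)
        linarith)
      (fun k hk hne => by
        have h1 := hp0 k hk
        have h2 := hp0 _ (Kodd_neg_mem hk)
        have h3 : 0 < p k := lt_of_le_of_ne h1 (Ne.symm hne)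
        show (0:ℝ) < p k + p (-k)
        linarith)
    rw [Z_algebra q hq3 p] at hjen
    exact hjen

lemma per_symbol (q : ℕ) (hq3 : 3 ≤ q) (p : ℤ → ℝ)
    (hp0 : ∀ k ∈ Kodd q, 0 ≤ p k) (hp1 : ∑ k ∈ Kodd q, p k = 1)
    {b : ℤ} (hb : b ∈ pmOne) :
    ∑ k ∈ Kodd q, p (k * b) * (-Real.logb 2 (rho p b k)) ≤
      (-∑ k ∈ Kodd q, p k * Real.logb 2 (p k)) +
        Real.logb 2 (2 * p 0 ^ 2 +
          ∑ k ∈ Finset.Icc (1 : ℤ) (((q - 1) / 2 : ℕ) : ℤ), (p k + p (-k)) ^ 2) := by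
  rcases pmOne_cases hb with h | h <;> subst h
  · have hre : ∑ k ∈ Kodd q, p (k * -1) * (-Real.logb 2 (rho p (-1) k))
        = ∑ k ∈ Kodd q, p k * (-Real.logb 2 (rho p 1 k)) := by
      rw [← sum_Kodd_neg q (fun k => p k * (-Real.logb 2 (rho p 1 k)))]
      apply Finset.sum_congr rfl
      intro k _
      have h3 : k * -1 = -k := by ring
      rw [h3, rho_neg p k]
    rw [hre]
    exact per_symbol_core q hq3 p hp0 hp1
  · have hre : ∑ k ∈ Kodd q, p (k * 1) * (-Real.logb 2 (rho p 1 k))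
        = ∑ k ∈ Kodd q, p k * (-Real.logb 2 (rho p 1 k)) := by
      apply Finset.sum_congr rfl; intro k _; rw [mul_one]
    rw [hre]
    exact per_symbol_core q hq3 p hp0 hp1

-- ==================== list/tuple helpers ====================

lemma ofFn_get_cast {A : Type*} (l : List A) {n : ℕ} (h : n = l.length) :
    List.ofFn (fun i : Fin n => l.get (Fin.cast h i)) = l := by
  apply List.ext_get
  · simp [h.symm]
  · intro i h1 h2
    rw [List.get_ofFn]
    exact congrArg l.get (Fin.ext (by simp))

lemma prod_sum_marg {n : ℕ} {K : Type*} [Fintype K] (g f : Fin n → K → ℝ)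
    (hg : ∀ j, ∑ k : K, g j k = 1) :
    ∑ t : Fin n → K, (∏ j, g j (t j)) * (∑ i, f i (t i))
      = ∑ i, ∑ k : K, g i k * f i k := by
  have step1 : ∀ t : Fin n → K, (∏ j, g j (t j)) * (∑ i, f i (t i))
      = ∑ i, ∏ j, (if j = i then g j (t j) * f j (t j) else g j (t j)) := by
    intro t
    rw [Finset.mul_sum]
    apply Finset.sum_congr rfl
    intro i _
    have e1 : ∏ j, (if j = i then g j (t j) * f j (t j) else g j (t j))
        = (g i (t i) * f i (t i)) * ∏ j ∈ Finset.univ.erase i, g j (t j) := by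
      rw [← Finset.mul_prod_erase Finset.univ
        (fun j => if j = i then g j (t j) * f j (t j) else g j (t j)) (Finset.mem_univ i)]
      rw [if_pos rfl]
      congr 1
      apply Finset.prod_congr rfl
      intro j hj
      rw [if_neg (Finset.ne_of_mem_erase hj)]
    have e2 : ∏ j, g j (t j) = g i (t i) * ∏ j ∈ Finset.univ.erase i, g j (t j) :=
      (Finset.mul_prod_erase Finset.univ _ (Finset.mem_univ i)).symm
    rw [e1, e2]
    ring
  rw [Finset.sum_congr rfl (fun t _ => step1 t), Finset.sum_comm]
  apply Finset.sum_congr rfl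
  intro i _
  have hps := Finset.prod_univ_sum (fun _ : Fin n => (Finset.univ : Finset K))
    (fun j k => if j = i then g j k * f j k else g j k)
  rw [Fintype.piFinset_univ] at hps
  rw [← hps]
  rw [Fintype.prod_eq_single i (fun j hj => by
    rw [Finset.sum_congr rfl (fun k _ => if_neg hj)]
    exact hg j)]
  simp

-- ==================== step B ====================

lemma stepB {S : Type*} (μ : FinProb Ω)
    (q : ℕ) (hq3 : 3 ≤ q) (p : ℤ → ℝ)
    (hp0 : ∀ k ∈ Kodd q, 0 ≤ p k) (hp1 : ∑ k ∈ Kodd q, p k = 1)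
    (X : Ω → S) (Y : Ω → List pmOne) (Yq : Ω → List (Kodd q))
    (hlen : ∀ ω, (Yq ω).length = (Y ω).length)
    (hcond : ∀ (x : S) (n : ℕ) (y : Fin n → pmOne) (y' : Fin n → Kodd q),
      0 < pr μ (fun ω => X ω = x ∧ Y ω = List.ofFn y) →
      pr μ (fun ω => Yq ω = List.ofFn y' ∧ X ω = x ∧ Y ω = List.ofFn y) /
        pr μ (fun ω => X ω = x ∧ Y ω = List.ofFn y) = ∏ i, p ((y' i : ℤ) * (y i : ℤ))) :
    condEntropy μ Y Yq ≤ expLen μ Y *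
      ((-∑ k ∈ Kodd q, p k * Real.logb 2 (p k)) +
        Real.logb 2 (2 * p 0 ^ 2 +
          ∑ k ∈ Finset.Icc (1 : ℤ) (((q - 1) / 2 : ℕ) : ℤ), (p k + p (-k)) ^ 2)) := by
  letI : DecidableEq (List ↥pmOne) := fun a b => Classical.propDecidable _
  letI : DecidableEq (List ↥(Kodd q)) := fun a b => Classical.propDecidable _
  set C : ℝ := (-∑ k ∈ Kodd q, p k * Real.logb 2 (p k)) +
      Real.logb 2 (2 * p 0 ^ 2 +
        ∑ k ∈ Finset.Icc (1 : ℤ) (((q - 1) / 2 : ℕ) : ℤ), (p k + p (-k)) ^ 2) with hC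
  set Q : List pmOne → List (Kodd q) → ℝ := fun y y' =>
    if h : y.length = y'.length then
      ∏ i : Fin y'.length, rho p ((y.get (Fin.cast h.symm i) : ℤ)) ((y'.get i : ℤ))
    else 0 with hQ
  have hQ0 : ∀ y y', 0 ≤ Q y y' := by
    intro y y'
    rw [hQ]
    dsimp only
    split
    · exact Finset.prod_nonneg fun i _ => rho_nonneg hp0 (y.get _).2 (y'.get i).2
    · exact le_refl 0
  have hQle1 : ∀ y y', Q y y' ≤ 1 := by
    intro y y'
    rw [hQ]
    dsimp only
    split
    · exact Finset.prod_le_one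
        (fun i _ => rho_nonneg hp0 (y.get _).2 (y'.get i).2)
        (fun i _ => rho_le_one hp0 (y.get _).2 (y'.get i).2)
    · norm_num
  have hlogQ : ∀ y y', 0 ≤ -Real.logb 2 (Q y y') := fun y y' =>
    neg_nonneg.2 (Real.logb_nonpos one_lt_two (hQ0 y y') (hQle1 y y'))
  have hQzero : ∀ y y', ¬ (y.length = y'.length) → Q y y' = 0 := by
    intro y y' h
    rw [hQ]
    dsimp only
    rw [dif_neg h]
  have hQeval1 : ∀ (y' : List (Kodd q)) (t : Fin y'.length → pmOne),
      Q (List.ofFn t) y' = ∏ i, rho p ((t i : ℤ)) ((y'.get i : ℤ)) := by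
    intro y' t
    rw [hQ]
    dsimp only
    rw [dif_pos (List.length_ofFn (f := t))]
    apply Finset.prod_congr rfl
    intro i _
    have hgt : (List.ofFn t).get (Fin.cast (List.length_ofFn (f := t)).symm i) = t i := by
      rw [List.get_ofFn]
      exact congrArg t (Fin.ext (by simp))
    rw [hgt]
  have hQeval2 : ∀ (y : List pmOne) (t : Fin y.length → Kodd q),
      Q y (List.ofFn t) = ∏ i, rho p ((y.get i : ℤ)) ((t i : ℤ)) := by
    intro y t
    rw [hQ]
    dsimp only
    rw [dif_pos (List.length_ofFn (f := t)).symm]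
    apply Fintype.prod_equiv (finCongr (List.length_ofFn (f := t)))
    intro i
    rw [List.get_ofFn]
    simp only [finCongr_apply]
  have hcondL : ∀ (x : S) (y : List pmOne) (t : Fin y.length → Kodd q),
      0 < pr μ (fun ω => X ω = x ∧ Y ω = y) →
      pr μ (fun ω => Yq ω = List.ofFn t ∧ X ω = x ∧ Y ω = y)
        = pr μ (fun ω => X ω = x ∧ Y ω = y) * ∏ i, p ((t i : ℤ) * ((y.get i : ℤ))) := by
    intro x y t hpos
    have e1 : pr μ (fun ω => X ω = x ∧ Y ω = List.ofFn y.get)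
        = pr μ (fun ω => X ω = x ∧ Y ω = y) :=
      pr_congr μ fun ω => by rw [List.ofFn_get]
    have e2 : pr μ (fun ω => Yq ω = List.ofFn t ∧ X ω = x ∧ Y ω = List.ofFn y.get)
        = pr μ (fun ω => Yq ω = List.ofFn t ∧ X ω = x ∧ Y ω = y) :=
      pr_congr μ fun ω => by rw [List.ofFn_get]
    have h1 := hcond x y.length y.get t (by rw [e1]; exact hpos)
    rw [e1, e2] at h1
    rw [div_eq_iff (ne_of_gt hpos)] at h1
    rw [h1]
    ring
  -- gibbs hypotheses
  have hQ1g : ∀ y', ∑ y ∈ Finset.univ.image Y, Q y y' ≤ 1 := by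
    intro y'
    have hfil : ∑ y ∈ (Finset.univ.image Y).filter (fun y => y.length = y'.length), Q y y'
        = ∑ y ∈ Finset.univ.image Y, Q y y' :=
      Finset.sum_filter_of_ne (fun y _ hne => by
        by_contra hl
        exact hne (hQzero y y' hl))
    rw [← hfil]
    have hsub : (Finset.univ.image Y).filter (fun y => y.length = y'.length) ⊆
        Finset.image (fun t : Fin y'.length → pmOne => List.ofFn t) Finset.univ := by
      intro y hy
      rw [Finset.mem_filter] at hy
      exact Finset.mem_image.2 ⟨fun i => y.get (Fin.cast hy.2.symm i), Finset.mem_univ _,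
        ofFn_get_cast y hy.2.symm⟩
    calc ∑ y ∈ (Finset.univ.image Y).filter (fun y => y.length = y'.length), Q y y'
        ≤ ∑ y ∈ Finset.image (fun t : Fin y'.length → pmOne => List.ofFn t) Finset.univ, Q y y' :=
          Finset.sum_le_sum_of_subset_of_nonneg hsub (fun y _ _ => hQ0 y y')
      _ = ∑ t : Fin y'.length → pmOne, Q (List.ofFn t) y' :=
          Finset.sum_image (fun a _ b _ h => List.ofFn_injective h)
      _ = ∑ t : Fin y'.length → pmOne, ∏ i, rho p ((t i : ℤ)) ((y'.get i : ℤ)) :=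
          Finset.sum_congr rfl (fun t _ => hQeval1 y' t)
      _ = ∏ i : Fin y'.length, ∑ b : pmOne, rho p ((b : ℤ)) ((y'.get i : ℤ)) := by
          have hps := Finset.prod_univ_sum (fun _ : Fin y'.length => (Finset.univ : Finset ↥pmOne))
            (fun i b => rho p ((b : ℤ)) ((y'.get i : ℤ)))
          rw [Fintype.piFinset_univ] at hps
          rw [← hps]
      _ = 1 := by
          rw [Finset.prod_congr rfl (fun i _ => ?_), Finset.prod_const_one]
          rw [Finset.sum_coe_sort pmOne (fun b => rho p b ((y'.get i : ℤ)))]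
          show ∑ b ∈ ({-1, 1} : Finset ℤ), rho p b ((y'.get i : ℤ)) = 1
          rw [Finset.sum_insert (by decide), Finset.sum_singleton]
          exact rho_sum p _
  have hposg : ∀ y y', 0 < pr μ (fun ω => Y ω = y ∧ Yq ω = y') → 0 < Q y y' := by
    intro y y' hpos
    obtain ⟨ω0, _, hωE⟩ := pr_pos_elim μ hpos
    have hl : y.length = y'.length := by rw [← hωE.1, ← hωE.2]; exact (hlen ω0).symm
    rw [← pr_partition μ X (fun ω => Y ω = y ∧ Yq ω = y')] at hpos
    obtain ⟨x, _, hx⟩ := sum_pos_elim hpos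
    have hxy : 0 < pr μ (fun ω => X ω = x ∧ Y ω = y) :=
      lt_of_lt_of_le hx (pr_mono μ fun ω h => ⟨h.1, h.2.1⟩)
    set t : Fin y.length → Kodd q := fun i => y'.get (Fin.cast hl i) with ht
    have hofn : List.ofFn t = y' := ofFn_get_cast y' hl
    have hyq : 0 < pr μ (fun ω => Yq ω = y' ∧ X ω = x ∧ Y ω = y) :=
      lt_of_lt_of_le hx (le_of_eq (pr_congr μ fun ω => by tauto))
    have hc := hcondL x y t hxy
    rw [hofn] at hc
    have hprodpos : 0 < ∏ i, p ((t i : ℤ) * ((y.get i : ℤ))) := by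
      by_contra hcon
      push_neg at hcon
      nlinarith [hc ▸ hyq, hxy, hcon]
    have hfac : ∀ i, 0 < p ((t i : ℤ) * ((y.get i : ℤ))) := by
      intro i
      have hne := Finset.prod_ne_zero_iff.1 (ne_of_gt hprodpos) i (Finset.mem_univ i)
      exact lt_of_le_of_ne (hp0 _ (Kodd_mul_mem (t i).2 (y.get i).2)) (Ne.symm hne)
    rw [← hofn, hQeval2 y t]
    exact Finset.prod_pos fun i _ => rho_pos hp0 (y.get i).2 (t i).2 (hfac i)
  have hmain := gibbs μ Y Yq Q hQ0 hQ1g hposg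
  -- rearrange the cross-entropy sum
  have hre : ∑ y' ∈ Finset.univ.image Yq, ∑ y ∈ Finset.univ.image Y,
      pr μ (fun ω => Y ω = y ∧ Yq ω = y') * (-Real.logb 2 (Q y y'))
      = ∑ y ∈ Finset.univ.image Y, ∑ x ∈ Finset.univ.image X, ∑ y' ∈ Finset.univ.image Yq,
        pr μ (fun ω => Yq ω = y' ∧ X ω = x ∧ Y ω = y) * (-Real.logb 2 (Q y y')) := by
    rw [Finset.sum_comm]
    apply Finset.sum_congr rfl
    intro y _
    rw [Finset.sum_comm]
    apply Finset.sum_congr rfl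
    intro y' _
    rw [← pr_partition μ X (fun ω => Y ω = y ∧ Yq ω = y'), Finset.sum_mul]
    apply Finset.sum_congr rfl
    intro x _
    congr 1
    exact pr_congr μ fun ω => by tauto
  -- main per-(y,x) bound
  have hbound : ∀ y ∈ Finset.univ.image Y, ∀ x ∈ Finset.univ.image X,
      ∑ y' ∈ Finset.univ.image Yq,
        pr μ (fun ω => Yq ω = y' ∧ X ω = x ∧ Y ω = y) * (-Real.logb 2 (Q y y'))
      ≤ pr μ (fun ω => X ω = x ∧ Y ω = y) * ((y.length : ℝ) * C) := by
    intro y _ x _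
    rcases eq_or_lt_of_le (pr_nonneg μ (fun ω => X ω = x ∧ Y ω = y)) with h0 | hxy
    · have hz : ∀ y' ∈ Finset.univ.image Yq,
          pr μ (fun ω => Yq ω = y' ∧ X ω = x ∧ Y ω = y) * (-Real.logb 2 (Q y y')) = 0 := by
        intro y' _
        have : pr μ (fun ω => Yq ω = y' ∧ X ω = x ∧ Y ω = y) = 0 :=
          le_antisymm (h0 ▸ pr_mono μ (fun ω h => ⟨h.2.1, h.2.2⟩)) (pr_nonneg μ _)
        rw [this, zero_mul]
      have hS : ∑ y' ∈ Finset.univ.image Yq,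
          pr μ (fun ω => Yq ω = y' ∧ X ω = x ∧ Y ω = y) * (-Real.logb 2 (Q y y')) = 0 :=
        Finset.sum_eq_zero hz
      rw [hS, ← h0, zero_mul]
    · have htnn : ∀ y', 0 ≤ pr μ (fun ω => Yq ω = y' ∧ X ω = x ∧ Y ω = y) *
          (-Real.logb 2 (Q y y')) := fun y' => mul_nonneg (pr_nonneg μ _) (hlogQ y y')
      have hfil : ∑ y' ∈ (Finset.univ.image Yq).filter (fun y' => y.length = y'.length),
          pr μ (fun ω => Yq ω = y' ∧ X ω = x ∧ Y ω = y) * (-Real.logb 2 (Q y y'))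
          = ∑ y' ∈ Finset.univ.image Yq,
            pr μ (fun ω => Yq ω = y' ∧ X ω = x ∧ Y ω = y) * (-Real.logb 2 (Q y y')) :=
        Finset.sum_filter_of_ne (fun y' _ hne => by
          have hprne : pr μ (fun ω => Yq ω = y' ∧ X ω = x ∧ Y ω = y) ≠ 0 := by
            intro hh; rw [hh, zero_mul] at hne; exact hne rfl
          have hprpos : 0 < pr μ (fun ω => Yq ω = y' ∧ X ω = x ∧ Y ω = y) :=
            lt_of_le_of_ne (pr_nonneg μ _) (Ne.symm hprne)
          obtain ⟨ω0, _, hωE⟩ := pr_pos_elim μ hprpos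
          rw [← hωE.2.2, ← hωE.1]
          exact (hlen ω0).symm)
      rw [← hfil]
      have hsub : (Finset.univ.image Yq).filter (fun y' => y.length = y'.length) ⊆
          Finset.image (fun t : Fin y.length → Kodd q => List.ofFn t) Finset.univ := by
        intro y' hy'
        rw [Finset.mem_filter] at hy'
        exact Finset.mem_image.2 ⟨fun i => y'.get (Fin.cast hy'.2 i), Finset.mem_univ _,
          ofFn_get_cast y' hy'.2⟩
      calc ∑ y' ∈ (Finset.univ.image Yq).filter (fun y' => y.length = y'.length),
          pr μ (fun ω => Yq ω = y' ∧ X ω = x ∧ Y ω = y) * (-Real.logb 2 (Q y y'))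
          ≤ ∑ y' ∈ Finset.image (fun t : Fin y.length → Kodd q => List.ofFn t) Finset.univ,
            pr μ (fun ω => Yq ω = y' ∧ X ω = x ∧ Y ω = y) * (-Real.logb 2 (Q y y')) :=
            Finset.sum_le_sum_of_subset_of_nonneg hsub (fun y' _ _ => htnn y')
        _ = ∑ t : Fin y.length → Kodd q,
            pr μ (fun ω => Yq ω = List.ofFn t ∧ X ω = x ∧ Y ω = y) *
              (-Real.logb 2 (Q y (List.ofFn t))) :=
            Finset.sum_image (fun a _ b _ h => List.ofFn_injective h)
        _ = ∑ t : Fin y.length → Kodd q,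
            (pr μ (fun ω => X ω = x ∧ Y ω = y) * ∏ i, p ((t i : ℤ) * ((y.get i : ℤ)))) *
              (-Real.logb 2 (∏ i, rho p ((y.get i : ℤ)) ((t i : ℤ)))) := by
            apply Finset.sum_congr rfl
            intro t _
            rw [hcondL x y t hxy, hQeval2 y t]
        _ ≤ ∑ t : Fin y.length → Kodd q,
            pr μ (fun ω => X ω = x ∧ Y ω = y) *
              ((∏ i, p ((t i : ℤ) * ((y.get i : ℤ)))) *
                (∑ i, -Real.logb 2 (rho p ((y.get i : ℤ)) ((t i : ℤ))))) := by
            apply Finset.sum_le_sum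
            intro t _
            by_cases hall : ∀ i, 0 < p ((t i : ℤ) * ((y.get i : ℤ)))
            · apply le_of_eq
              have hrpos : ∀ i, 0 < rho p ((y.get i : ℤ)) ((t i : ℤ)) :=
                fun i => rho_pos hp0 (y.get i).2 (t i).2 (hall i)
              rw [Real.logb_prod Finset.univ _ (fun i _ => ne_of_gt (hrpos i))]
              rw [← Finset.sum_neg_distrib]
              ring
            · push_neg at hall
              obtain ⟨i, hi⟩ := hall
              have hzero : p ((t i : ℤ) * ((y.get i : ℤ))) = 0 :=
                le_antisymm hi (hp0 _ (Kodd_mul_mem (t i).2 (y.get i).2))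
              have hprod0 : ∏ i, p ((t i : ℤ) * ((y.get i : ℤ))) = 0 :=
                Finset.prod_eq_zero (Finset.mem_univ i) hzero
              rw [hprod0]
              simp
        _ = pr μ (fun ω => X ω = x ∧ Y ω = y) *
            ∑ i : Fin y.length, ∑ k : Kodd q,
              p ((k : ℤ) * ((y.get i : ℤ))) * (-Real.logb 2 (rho p ((y.get i : ℤ)) ((k : ℤ)))) := by
            rw [← Finset.mul_sum]
            congr 1
            exact prod_sum_marg
              (fun (j : Fin y.length) (k : {z // z ∈ Kodd q}) => p ((k : ℤ) * ((y.get j : ℤ))))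
              (fun (i : Fin y.length) (k : {z // z ∈ Kodd q}) =>
                -Real.logb 2 (rho p ((y.get i : ℤ)) ((k : ℤ))))
              (fun j => by
                rw [Finset.sum_coe_sort (Kodd q) (fun k => p (k * ((y.get j : ℤ))))]
                exact row_sum q p hp1 (y.get j).2)
        _ ≤ pr μ (fun ω => X ω = x ∧ Y ω = y) * ((y.length : ℝ) * C) := by
            apply mul_le_mul_of_nonneg_left _ (le_of_lt hxy)
            calc ∑ i : Fin y.length, ∑ k : Kodd q,
                p ((k : ℤ) * ((y.get i : ℤ))) * (-Real.logb 2 (rho p ((y.get i : ℤ)) ((k : ℤ))))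
                ≤ ∑ _i : Fin y.length, C := by
                  apply Finset.sum_le_sum
                  intro i _
                  rw [Finset.sum_coe_sort (Kodd q)
                    (fun k => p (k * ((y.get i : ℤ))) * (-Real.logb 2 (rho p ((y.get i : ℤ)) k)))]
                  exact per_symbol q hq3 p hp0 hp1 (y.get i).2
              _ = (y.length : ℝ) * C := by
                  rw [Finset.sum_const, Finset.card_univ, Fintype.card_fin, nsmul_eq_mul]
  -- assemble
  have expLen_eq' : expLen μ Y
      = ∑ y ∈ Finset.univ.image Y, pr μ (fun ω => Y ω = y) * (y.length : ℝ) := by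
    rw [expLen_eq μ Y]
    exact Finset.sum_congr (image_congr_inst _ _ Y) (fun _ _ => rfl)
  have hfin : ∑ y ∈ Finset.univ.image Y, ∑ x ∈ Finset.univ.image X,
      pr μ (fun ω => X ω = x ∧ Y ω = y) * ((y.length : ℝ) * C) = expLen μ Y * C := by
    have e1 : ∀ y ∈ Finset.univ.image Y,
        (∑ x ∈ Finset.univ.image X, pr μ (fun ω => X ω = x ∧ Y ω = y) * ((y.length : ℝ) * C))
        = pr μ (fun ω => Y ω = y) * (y.length : ℝ) * C := by
      intro y _
      rw [← Finset.sum_mul, pr_partition μ X (fun ω => Y ω = y)]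
      ring
    rw [Finset.sum_congr rfl e1, ← Finset.sum_mul, expLen_eq']
  calc condEntropy μ Y Yq
      ≤ ∑ y' ∈ Finset.univ.image Yq, ∑ y ∈ Finset.univ.image Y,
          pr μ (fun ω => Y ω = y ∧ Yq ω = y') * (-Real.logb 2 (Q y y')) := hmain
    _ = ∑ y ∈ Finset.univ.image Y, ∑ x ∈ Finset.univ.image X, ∑ y' ∈ Finset.univ.image Yq,
          pr μ (fun ω => Yq ω = y' ∧ X ω = x ∧ Y ω = y) * (-Real.logb 2 (Q y y')) := hre
    _ ≤ ∑ y ∈ Finset.univ.image Y, ∑ x ∈ Finset.univ.image X,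
          pr μ (fun ω => X ω = x ∧ Y ω = y) * ((y.length : ℝ) * C) :=
        Finset.sum_le_sum (fun y hy => Finset.sum_le_sum (fun x hx => hbound y hy x hx))
    _ = expLen μ Y * C := hfin

/-- for the binary input symmetric `q`-ary output kernel `W(b,k) = p (k·b)`
(odd `q ≥ 3`),
`I(X;Y⁽q⁾) ≥ I(X;Y) − E[|Y|]·[H(p_{−(q−1)/2},…,p_{(q−1)/2}) + log₂(2p₀² + ∑_{k=1}^{(q−1)/2}(p_k+p_{−k})²)]`. -/
theorem stmt16 {Ω S : Type*} [Fintype Ω] (μ : FinProb Ω)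
    (q : ℕ) (hq : Odd q) (hq3 : 3 ≤ q) (p : ℤ → ℝ)
    (hp0 : ∀ k ∈ Kodd q, 0 ≤ p k) (hp1 : ∑ k ∈ Kodd q, p k = 1)
    (X : Ω → S) (Y : Ω → List pmOne) (Yq : Ω → List (Kodd q))
    (hlen : ∀ ω, (Yq ω).length = (Y ω).length)
    (hcond : ∀ (x : S) (n : ℕ) (y : Fin n → pmOne) (y' : Fin n → Kodd q),
      0 < pr μ (fun ω => X ω = x ∧ Y ω = List.ofFn y) →
      pr μ (fun ω => Yq ω = List.ofFn y' ∧ X ω = x ∧ Y ω = List.ofFn y) /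
        pr μ (fun ω => X ω = x ∧ Y ω = List.ofFn y) = ∏ i, p ((y' i : ℤ) * (y i : ℤ))) :
    mutualInfo μ X Yq ≥ mutualInfo μ X Y -
      expLen μ Y * ((-∑ k ∈ Kodd q, p k * Real.logb 2 (p k)) +
        Real.logb 2 (2 * p 0 ^ 2 +
          ∑ k ∈ Finset.Icc (1 : ℤ) (((q - 1) / 2 : ℕ) : ℤ), (p k + p (-k)) ^ 2)) := by
  have htri := condEntropy_triangle μ X Y Yq
  have hB := stepB μ q hq3 p hp0 hp1 X Y Yq hlen hcond
  unfold mutualInfo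
  linarith


end
end
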